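/- arXiv:2210.05237 — 2 statements merged into one kernel-verified Lean document; each statement's English description precedes it below -/
import Mathlib

section
/- With m = 2 resources, the mechanism F2* satisfies SI, EF, PO, and SP. -/
open Finset
open scoped Classical

/-- A valid instance: all demands lie in `(0,1]` and every agent has a resource
with normalized demand `1` (its dominant resource). -/
def ValidInstance {n m : ℕ} (d : Fin n → Fin m → ℝ) : Prop :=
  (∀ i r, 0 < d i r ∧ d i r ≤ 1) ∧ ∀ i, ∃ r, d i r = 1

/-- Entrywise nonnegative allocation. -/
def NonnegAlloc {n m : ℕ} (A : Fin n → Fin m → ℝ) : Prop := ∀ i r, 0 ≤ A i r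

/-- A feasible allocation: nonnegative and no resource over-allocated. -/
def Feasible {n m : ℕ} (A : Fin n → Fin m → ℝ) : Prop :=
  NonnegAlloc A ∧ ∀ r, ∑ i, A i r ≤ 1

/-- Leontief utility of a bundle `Av` for demand vector `dv`:
the largest `y ≥ 0` with `y * dv r ≤ Av r` for all `r`. -/
noncomputable def util {m : ℕ} (dv Av : Fin m → ℝ) : ℝ :=
  sSup {y : ℝ | 0 ≤ y ∧ ∀ r, y * dv r ≤ Av r}

/-- Share incentive: every agent gets utility at least `1/n`. -/
def SI {n m : ℕ} (d A : Fin n → Fin m → ℝ) : Prop :=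
  ∀ i, (1 : ℝ) / n ≤ util (d i) (A i)

/-- Envy-freeness: no agent prefers another agent's bundle. -/
def EF {n m : ℕ} (d A : Fin n → Fin m → ℝ) : Prop :=
  ∀ i j, util (d i) (A j) ≤ util (d i) (A i)

/-- Social welfare: the sum of all utilities. -/
noncomputable def SW {n m : ℕ} (d A : Fin n → Fin m → ℝ) : ℝ :=
  ∑ i, util (d i) (A i)

/-- Utilization: the minimum over resources of the total allocated amount. -/
noncomputable def Util {n m : ℕ} (A : Fin n → Fin m → ℝ) : ℝ :=
  ⨅ r : Fin m, ∑ i, A i r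

/-- Pareto optimality of an allocation. -/
def PO {n m : ℕ} (d A : Fin n → Fin m → ℝ) : Prop :=
  ¬ ∃ A' : Fin n → Fin m → ℝ, Feasible A' ∧
      (∀ i, util (d i) (A i) ≤ util (d i) (A' i)) ∧
      ∃ i, util (d i) (A i) < util (d i) (A' i)

/-- Agents whose dominant resource is resource 1 (index `0`). -/
noncomputable def G1 {n m : ℕ} [NeZero m] (d : Fin n → Fin m → ℝ) : Finset (Fin n) :=
  Finset.univ.filter (fun i => d i 0 = 1)

/-- Agents whose demand for resource 1 (index `0`) is below `1`. -/
noncomputable def G2 {n m : ℕ} [NeZero m] (d : Fin n → Fin m → ℝ) : Finset (Fin n) :=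
  Finset.univ.filter (fun i => d i 0 < 1)

/-- Minority ratio `α = |G2| / n` for two resources. -/
def MinorityRatio {n : ℕ} (d : Fin n → Fin 2 → ℝ) (α : ℚ) : Prop :=
  ((G2 d).card : ℚ) = α * n

/-- The DRF allocation: every agent gets `x* • d i` with
`x* = 1 / max_r Σ_j d j r`. -/
noncomputable def DRF {n m : ℕ} (d : Fin n → Fin m → ℝ) : Fin n → Fin m → ℝ :=
  fun i r => (1 / ⨆ r' : Fin m, ∑ j, d j r') * d i r

/-- The F1 allocation at water level `t`: agents in `G1` get dominant share `1/n`;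
an agent `i` with `d i 0 < 1` gets `max (d i 0 / n) t` of resource 1, i.e. has
scale factor `max (1/n) (t / d i 0)`. -/
noncomputable def F1At {n m : ℕ} [NeZero m] (d : Fin n → Fin m → ℝ) (t : ℝ) :
    Fin n → Fin m → ℝ :=
  fun i r => (if d i 0 = 1 then (1 : ℝ) / n else max ((1 : ℝ) / n) (t / d i 0)) * d i r

/-- The F1 allocation: F1 at the largest feasible water level. -/
noncomputable def F1 {n m : ℕ} [NeZero m] (d : Fin n → Fin m → ℝ) : Fin n → Fin m → ℝ :=
  F1At d (sSup {t : ℝ | 0 ≤ t ∧ Feasible (F1At d t)})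

/-- Residual amount of resource 1 after every agent receives `(1/n) • d i`. -/
noncomputable def R1 {n : ℕ} (d : Fin n → Fin 2 → ℝ) : ℝ :=
  1 - ((G1 d).card : ℝ) / n - (∑ i ∈ G2 d, d i 0) / n

/-- Residual amount of resource 2 after every agent receives `(1/n) • d i`. -/
noncomputable def R2 {n : ℕ} (d : Fin n → Fin 2 → ℝ) : ℝ :=
  1 - ((G2 d).card : ℝ) / n - (∑ i ∈ G1 d, d i 1) / n

/-- Total increase over the equal split of the resource-1 shares of `G1`. -/
noncomputable def dS1 {n : ℕ} (d A : Fin n → Fin 2 → ℝ) : ℝ :=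
  (∑ i ∈ G1 d, A i 0) - ((G1 d).card : ℝ) / n

/-- Total increase over the equal split of the resource-2 shares of `G2`. -/
noncomputable def dS2 {n : ℕ} (d A : Fin n → Fin 2 → ℝ) : ℝ :=
  (∑ i ∈ G2 d, A i 1) - ((G2 d).card : ℝ) / n

/-- Water-filling structure of the F2-type allocations: within `G1` the
resource-2 shares are `max (d i 1 / n) t1`, within `G2` the resource-1 shares
are `max (d i 0 / n) t2`, and bundles are proportional to demands. -/
def Waterfill {n : ℕ} (d A : Fin n → Fin 2 → ℝ) (t1 t2 : ℝ) : Prop :=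
  ∀ i, (d i 0 = 1 → A i 1 = max (d i 1 / n) t1 ∧ A i 0 = A i 1 / d i 1) ∧
       (d i 0 < 1 → A i 0 = max (d i 0 / n) t2 ∧ A i 1 = A i 0 / d i 0)

/-- The output of an F2-type mechanism whose coupled rates follow the ratio
`ρ1 / ρ2`: a feasible water-filling allocation with
`dS1 / dS2 = ρ1 / ρ2` in which some resource is fully allocated. -/
def IsF2AllocWith {n : ℕ} (d A : Fin n → Fin 2 → ℝ) (ρ1 ρ2 : ℝ) : Prop :=
  ∃ t1 t2 : ℝ, 0 ≤ t1 ∧ 0 ≤ t2 ∧ Waterfill d A t1 t2 ∧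
    dS1 d A * ρ2 = dS2 d A * ρ1 ∧ Feasible A ∧ ∃ r, ∑ i, A i r = 1

/-- The output of mechanism F2 (rates coupled by `R1 / R2`). -/
def IsF2Alloc {n : ℕ} (d A : Fin n → Fin 2 → ℝ) : Prop :=
  IsF2AllocWith d A (R1 d) (R2 d)

/-- `R*_1 = R_1 + d_{i*,1}/n` where `i*` minimizes `d i 0` over `G2`. -/
noncomputable def R1s {n : ℕ} (d : Fin n → Fin 2 → ℝ) : ℝ :=
  R1 d + sInf ((fun i => d i 0) '' {i : Fin n | d i 0 < 1}) / n

/-- `R*_2 = R_2 + d_{j*,2}/n` where `j*` minimizes `d j 1` over `G1`. -/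
noncomputable def R2s {n : ℕ} (d : Fin n → Fin 2 → ℝ) : ℝ :=
  R2 d + sInf ((fun i => d i 1) '' {i : Fin n | d i 0 = 1}) / n

/-- The output of mechanism F2* (rates coupled by `R*_1 / R*_2`). -/
def IsF2sAlloc {n : ℕ} (d A : Fin n → Fin 2 → ℝ) : Prop :=
  IsF2AllocWith d A (R1s d) (R2s d)


section Helpers

lemma max_div_aux {c : ℝ} (hc : 0 < c) (m t : ℝ) :
    max (1/m) (t/c) = max (c/m) t / c := by
  rw [← max_div_div_right hc.le, div_right_comm, div_self hc.ne']

lemma mul_max_aux {c : ℝ} (hc : 0 < c) (m t : ℝ) :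
    c * max (1/m) (t/c) = max (c/m) t := by
  rw [max_div_aux hc, mul_div_cancel₀ _ hc.ne']

lemma util_eq_min {dv Av : Fin 2 → ℝ} (h0 : 0 < dv 0) (h1 : 0 < dv 1)
    (hA0 : 0 ≤ Av 0) (hA1 : 0 ≤ Av 1) :
    util dv Av = min (Av 0 / dv 0) (Av 1 / dv 1) := by
  have hm : (0:ℝ) ≤ min (Av 0 / dv 0) (Av 1 / dv 1) :=
    le_min (div_nonneg hA0 h0.le) (div_nonneg hA1 h1.le)
  have hset : {y : ℝ | 0 ≤ y ∧ ∀ r, y * dv r ≤ Av r}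
      = Set.Icc 0 (min (Av 0 / dv 0) (Av 1 / dv 1)) := by
    ext y
    simp only [Set.mem_setOf_eq, Set.mem_Icc, Fin.forall_fin_two, le_min_iff]
    constructor
    · rintro ⟨hy, h₀, h₁⟩
      exact ⟨hy, (le_div_iff₀ h0).mpr h₀, (le_div_iff₀ h1).mpr h₁⟩
    · rintro ⟨hy, h₀, h₁⟩
      exact ⟨hy, (le_div_iff₀ h0).mp h₀, (le_div_iff₀ h1).mp h₁⟩
  rw [util, hset, csSup_Icc hm]

lemma level_cap {n : ℕ} (hn : 0 < n) (P : Finset (Fin n)) (sA : Fin n → ℝ) (t2 : ℝ)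
    (hP : ∀ j ∈ P, (1:ℝ)/n ≤ sA j) (hQ : ∀ j ∉ P, t2 ≤ sA j) (hQne : ∃ j, j ∉ P)
    (feas : ∑ j, sA j ≤ 1) : t2 ≤ 1/n := by
  have hnn : (0:ℝ) < n := by exact_mod_cast hn
  by_contra hlt
  push_neg at hlt
  have hcard : (P.card : ℝ) + (Pᶜ.card : ℝ) = n := by
    have := P.card_add_card_compl
    rw [Fintype.card_fin] at this
    exact_mod_cast this
  have h1 : (P.card : ℝ) * (1/n) ≤ ∑ j ∈ P, sA j := by
    calc (P.card : ℝ) * (1/n) = ∑ _j ∈ P, (1:ℝ)/n := by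
          rw [Finset.sum_const, nsmul_eq_mul]
      _ ≤ ∑ j ∈ P, sA j := Finset.sum_le_sum hP
  have h2 : (Pᶜ.card : ℝ) * t2 ≤ ∑ j ∈ Pᶜ, sA j := by
    calc (Pᶜ.card : ℝ) * t2 = ∑ _j ∈ Pᶜ, t2 := by rw [Finset.sum_const, nsmul_eq_mul]
      _ ≤ ∑ j ∈ Pᶜ, sA j := Finset.sum_le_sum (fun j hj => hQ j (Finset.mem_compl.mp hj))
  have hsplit : ∑ j ∈ P, sA j + ∑ j ∈ Pᶜ, sA j = ∑ j, sA j :=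
    Finset.sum_add_sum_compl P sA
  obtain ⟨j0, hj0⟩ := hQne
  have hq1 : (1:ℝ) ≤ (Pᶜ.card : ℝ) := by
    have : 0 < Pᶜ.card := Finset.card_pos.mpr ⟨j0, Finset.mem_compl.mpr hj0⟩
    exact_mod_cast this
  have key : (Pᶜ.card : ℝ) * (t2 - 1/n) > 0 :=
    mul_pos (lt_of_lt_of_le zero_lt_one hq1) (sub_pos.mpr hlt)
  have hone : (P.card : ℝ) * (1/n) + (Pᶜ.card : ℝ) * (1/n) = 1 := by
    field_simp
    linarith [hcard]
  nlinarith [key]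

end Helpers
lemma sum_ge_add_of_mem {α : Type*} {s : Finset α} {f g : α → ℝ}
    (h : ∀ j ∈ s, f j ≤ g j) {i : α} (hi : i ∈ s) :
    (∑ j ∈ s, f j) + (g i - f i) ≤ ∑ j ∈ s, g j := by
  classical
  have h1 : f i + ∑ j ∈ s.erase i, f j = ∑ j ∈ s, f j := Finset.add_sum_erase s f hi
  have h2 : g i + ∑ j ∈ s.erase i, g j = ∑ j ∈ s, g j := Finset.add_sum_erase s g hi
  have h3 : ∑ j ∈ s.erase i, f j ≤ ∑ j ∈ s.erase i, g j :=
    Finset.sum_le_sum fun j hj => h j (Finset.mem_of_mem_erase hj)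
  linarith

lemma sum_ge_add_two_of_mem {α : Type*} {s : Finset α} {f g : α → ℝ}
    (h : ∀ j ∈ s, f j ≤ g j) {i k : α} (hi : i ∈ s) (hk : k ∈ s) (hik : k ≠ i) :
    (∑ j ∈ s, f j) + (g i - f i) + (g k - f k) ≤ ∑ j ∈ s, g j := by
  classical
  have hk' : k ∈ s.erase i := Finset.mem_erase.mpr ⟨hik, hk⟩
  have h1 : f i + ∑ j ∈ s.erase i, f j = ∑ j ∈ s, f j := Finset.add_sum_erase s f hi
  have h2 : g i + ∑ j ∈ s.erase i, g j = ∑ j ∈ s, g j := Finset.add_sum_erase s g hi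
  have h3 := sum_ge_add_of_mem (f := f) (g := g)
    (fun j hj => h j (Finset.mem_of_mem_erase hj)) hk'
  linarith
lemma final_arith_aux {x m ep c : ℝ} (hc : 0 ≤ c) (hx : c ≤ x) (hm : 0 < m)
    (hm1 : m ≤ 1) (hme : m ≤ ep) :
    m * ((x - c) * (ep - m) + c) ≤ ep * x := by
  have h1 : 0 ≤ (x - c) * (ep * (1 - m) + m * m) :=
    mul_nonneg (by linarith) (by nlinarith)
  have h2 : 0 ≤ c * (ep - m) := mul_nonneg hc (by linarith)
  nlinarith [h1, h2]

section NoBothUp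

set_option maxHeartbeats 2000000

variable {n : ℕ}

lemma no_both_up (hn : 0 < n) (P : Finset (Fin n)) (i : Fin n) (hiP : i ∈ P)
    (w w' sA sB sA' sB' : Fin n → ℝ) (t1 t2 t1' t2' : ℝ)
    (hw : ∀ j, 0 < w j ∧ w j ≤ 1) (hw' : ∀ j, 0 < w' j ∧ w' j ≤ 1)
    (hagree : ∀ j, j ≠ i → w' j = w j)
    (hP : ∀ j ∈ P, sA j = max ((1:ℝ)/n) (t1 / w j) ∧ sB j = max (w j / n) t1)
    (hQ : ∀ j ∈ Pᶜ, sA j = max (w j / n) t2 ∧ sB j = max ((1:ℝ)/n) (t2 / w j))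
    (hP' : ∀ j ∈ P, sA' j = max ((1:ℝ)/n) (t1' / w' j) ∧ sB' j = max (w' j / n) t1')
    (hQ' : ∀ j ∈ Pᶜ, sA' j = max (w' j / n) t2' ∧ sB' j = max ((1:ℝ)/n) (t2' / w' j))
    (feasA : ∑ j, sA j ≤ 1) (feasB : ∑ j, sB j ≤ 1)
    (feasA' : ∑ j, sA' j ≤ 1) (feasB' : ∑ j, sB' j ≤ 1)
    (hfull : (∑ j, sA j) = 1 ∨ (∑ j, sB j) = 1)
    (cP cP' cQ : ℝ)
    (hcPmem : ∃ j ∈ P, cP = w j) (hcPlb : ∀ j ∈ P, cP ≤ w j)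
    (hcPmem' : ∃ j ∈ P, cP' = w' j) (hcPlb' : ∀ j ∈ P, cP' ≤ w' j)
    (hcQmem : Pᶜ.Nonempty → ∃ j ∈ Pᶜ, cQ = w j) (hcQlb : ∀ j ∈ Pᶜ, cQ ≤ w j)
    (RAs RBs RBs' : ℝ)
    (hRAs : RAs = 1 - (P.card : ℝ) / n - (∑ j ∈ Pᶜ, w j) / n + cQ / n)
    (hRBs : RBs = 1 - ((Pᶜ).card : ℝ) / n - (∑ j ∈ P, w j) / n + cP / n)
    (hRBs' : RBs' = 1 - ((Pᶜ).card : ℝ) / n - (∑ j ∈ P, w' j) / n + cP' / n)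
    (hcouple : ((∑ j ∈ P, sA j) - (P.card : ℝ) / n) * RBs
        = ((∑ j ∈ Pᶜ, sB j) - ((Pᶜ).card : ℝ) / n) * RAs)
    (hcouple' : ((∑ j ∈ P, sA' j) - (P.card : ℝ) / n) * RBs'
        = ((∑ j ∈ Pᶜ, sB' j) - ((Pᶜ).card : ℝ) / n) * RAs) :
    ¬ (sA i < sA' i ∧ sB i < sB' i) := by
  rintro ⟨hxx, hzz⟩
  have hnn : (0:ℝ) < n := by exact_mod_cast hn
  have hcard : (P.card : ℝ) + ((Pᶜ).card : ℝ) = n := by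
    have := P.card_add_card_compl
    rw [Fintype.card_fin] at this
    exact_mod_cast this
  set e := w i with he_def
  set e' := w' i with he'_def
  have hepos : 0 < e := (hw i).1
  have hele : e ≤ 1 := (hw i).2
  have he'pos : 0 < e' := (hw' i).1
  have he'le : e' ≤ 1 := (hw' i).2
  have hx_eq : sA i = max ((1:ℝ)/n) (t1 / e) := (hP i hiP).1
  have hz_eq : sB i = max (e / n) t1 := (hP i hiP).2
  have hx'_eq : sA' i = max ((1:ℝ)/n) (t1' / e') := (hP' i hiP).1
  have hz'_eq : sB' i = max (e' / n) t1' := (hP' i hiP).2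
  have hzx : sB i = e * sA i := by rw [hx_eq, hz_eq, mul_max_aux hepos]
  have hzx' : sB' i = e' * sA' i := by rw [hx'_eq, hz'_eq, mul_max_aux he'pos]
  -- degenerate case
  rcases (Pᶜ).eq_empty_or_nonempty with hQe | hQne
  · have hPuniv : P = Finset.univ := by rwa [← Finset.compl_eq_empty_iff]
    have hle : ∀ j ∈ Finset.univ, (1:ℝ)/n ≤ sA j := by
      intro j _
      rw [(hP j (hPuniv ▸ Finset.mem_univ j)).1]; exact le_max_left _ _
    have hconst : ∑ _j : Fin n, (1:ℝ)/n = 1 := by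
      rw [Finset.sum_const, nsmul_eq_mul, Finset.card_univ, Fintype.card_fin]
      field_simp
    have hall := (Finset.sum_eq_sum_iff_of_le hle).mp
      (le_antisymm (Finset.sum_le_sum hle) (by rw [hconst]; exact feasA))
    have hle' : ∀ j ∈ Finset.univ, (1:ℝ)/n ≤ sA' j := by
      intro j _
      rw [(hP' j (hPuniv ▸ Finset.mem_univ j)).1]; exact le_max_left _ _
    have hall' := (Finset.sum_eq_sum_iff_of_le hle').mp
      (le_antisymm (Finset.sum_le_sum hle') (by rw [hconst]; exact feasA'))
    rw [← hall i (Finset.mem_univ i), ← hall' i (Finset.mem_univ i)] at hxx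
    exact lt_irrefl _ hxx
  -- basic facts
  have hx_ge : (1:ℝ)/n ≤ sA i := by rw [hx_eq]; exact le_max_left _ _
  have hx'_gt : (1:ℝ)/n < sA' i := lt_of_le_of_lt hx_ge hxx
  have hx'_val : sA' i = t1' / e' := by
    rw [hx'_eq] at hx'_gt ⊢
    rcases max_cases ((1:ℝ)/n) (t1' / e') with ⟨h, _⟩ | ⟨h, _⟩
    · rw [h] at hx'_gt; exact absurd hx'_gt (lt_irrefl _)
    · rw [h]
  have ht1'_eq : t1' = e' * sA' i := by rw [hx'_val, mul_div_cancel₀ _ he'pos.ne']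
  have hz'_val : sB' i = t1' := by rw [hzx', hx'_val, mul_div_cancel₀ _ he'pos.ne']
  have ht1_le : t1 ≤ e * sA i := by
    rw [hx_eq, mul_max_aux hepos]; exact le_max_right _ _
  have ht1t1' : t1 < t1' := by
    have h1 : t1 ≤ sB i := by rw [hz_eq]; exact le_max_right _ _
    rw [← hz'_val]; exact lt_of_le_of_lt h1 hzz
  have hMONO_P : ∀ j ∈ P, sA j ≤ sA' j ∧ sB j ≤ sB' j := by
    intro j hj
    by_cases hji : j = i
    · subst hji; exact ⟨hxx.le, hzz.le⟩
    · rw [(hP j hj).1, (hP j hj).2, (hP' j hj).1, (hP' j hj).2, hagree j hji]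
      exact ⟨max_le_max le_rfl ((div_le_div_iff_of_pos_right (hw j).1).mpr ht1t1'.le),
        max_le_max le_rfl ht1t1'.le⟩
  have hne_Q : ∀ j ∈ Pᶜ, j ≠ i :=
    fun j hj hrfl => (Finset.mem_compl.mp hj) (hrfl ▸ hiP)
  have hQA_eq : ∀ j ∈ Pᶜ, sA j = w j * sB j := by
    intro j hj
    rw [(hQ j hj).1, (hQ j hj).2, mul_max_aux (hw j).1]
  have hQA'_eq : ∀ j ∈ Pᶜ, sA' j = w j * sB' j := by
    intro j hj
    rw [(hQ' j hj).1, (hQ' j hj).2, hagree j (hne_Q j hj), mul_max_aux (hw j).1]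
  rcases le_or_gt (∑ j ∈ Pᶜ, sB j) (∑ j ∈ Pᶜ, sB' j) with hbb | hbb
  · -- case: Q-side sum went up; all shares weakly up, contradiction with fullness
    have hMONO_Q : ∀ j ∈ Pᶜ, sA j ≤ sA' j ∧ sB j ≤ sB' j := by
      rcases le_or_gt t2 t2' with ht | ht
      · intro j hj
        rw [(hQ j hj).1, (hQ j hj).2, (hQ' j hj).1, (hQ' j hj).2, hagree j (hne_Q j hj)]
        exact ⟨max_le_max le_rfl ht,
          max_le_max le_rfl ((div_le_div_iff_of_pos_right (hw j).1).mpr ht)⟩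
      · have hle : ∀ j ∈ Pᶜ, sB' j ≤ sB j := fun j hj => by
          rw [(hQ j hj).2, (hQ' j hj).2, hagree j (hne_Q j hj)]
          exact max_le_max le_rfl ((div_le_div_iff_of_pos_right (hw j).1).mpr ht.le)
        have hall := (Finset.sum_eq_sum_iff_of_le hle).mp
          (le_antisymm (Finset.sum_le_sum hle) hbb)
        intro j hj
        have hBeq : sB' j = sB j := hall j hj
        constructor
        · rw [hQA_eq j hj, hQA'_eq j hj, hBeq]
        · rw [hBeq]
    have hallA : ∀ j ∈ Finset.univ, sA j ≤ sA' j := by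
      intro j _
      by_cases hj : j ∈ P
      · exact (hMONO_P j hj).1
      · exact (hMONO_Q j (Finset.mem_compl.mpr hj)).1
    have hallB : ∀ j ∈ Finset.univ, sB j ≤ sB' j := by
      intro j _
      by_cases hj : j ∈ P
      · exact (hMONO_P j hj).2
      · exact (hMONO_Q j (Finset.mem_compl.mpr hj)).2
    rcases hfull with hfA | hfB
    · have := Finset.sum_lt_sum hallA ⟨i, Finset.mem_univ i, hxx⟩
      linarith [feasA']
    · have := Finset.sum_lt_sum hallB ⟨i, Finset.mem_univ i, hzz⟩
      linarith [feasB']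
  · -- case: Q-side sum went down
    -- case: Q-side sum went down  (hbb : ∑ sB' < ∑ sB on Pᶜ)
    have ht2'lt : t2' < t2 := by
      by_contra h
      push_neg at h
      have hup : ∀ j ∈ Pᶜ, sB j ≤ sB' j := fun j hj => by
        rw [(hQ j hj).2, (hQ' j hj).2, hagree j (hne_Q j hj)]
        exact max_le_max le_rfl ((div_le_div_iff_of_pos_right (hw j).1).mpr h)
      exact absurd (Finset.sum_le_sum hup) (not_le.mpr hbb)
    have hQdown : ∀ j ∈ Pᶜ, sB' j ≤ sB j := fun j hj => by
      rw [(hQ j hj).2, (hQ' j hj).2, hagree j (hne_Q j hj)]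
      exact max_le_max le_rfl ((div_le_div_iff_of_pos_right (hw j).1).mpr ht2'lt.le)
    -- sums abbreviations (plain names)
    have hsum_diff : ∑ j ∈ P, w' j = ∑ j ∈ P, w j + (e' - e) := by
      have h1 : ∑ j ∈ P, (w' j - w j) = e' - e := by
        rw [Finset.sum_eq_single i (fun b _ hbi => by rw [hagree b hbi, sub_self])
          (fun h => absurd hiP h)]
      have h2 : ∑ j ∈ P, (w' j - w j) = ∑ j ∈ P, w' j - ∑ j ∈ P, w j :=
        Finset.sum_sub_distrib _ _
      linarith
    have hg_eq : RBs - RBs' = (e' - e)/n - (cP' - cP)/n := by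
      rw [hRBs, hRBs', hsum_diff]; ring
    -- positivity of the R-quantities
    have hQw_le : ∑ j ∈ Pᶜ, w j ≤ ((Pᶜ).card : ℝ) := by
      calc ∑ j ∈ Pᶜ, w j ≤ ∑ _j ∈ Pᶜ, (1:ℝ) := Finset.sum_le_sum (fun j _ => (hw j).2)
        _ = ((Pᶜ).card : ℝ) := by rw [Finset.sum_const, nsmul_eq_mul, mul_one]
    have hPw_le : ∑ j ∈ P, w j ≤ (P.card : ℝ) := by
      calc ∑ j ∈ P, w j ≤ ∑ _j ∈ P, (1:ℝ) := Finset.sum_le_sum (fun j _ => (hw j).2)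
        _ = (P.card : ℝ) := by rw [Finset.sum_const, nsmul_eq_mul, mul_one]
    have hPw'_le : ∑ j ∈ P, w' j ≤ (P.card : ℝ) := by
      calc ∑ j ∈ P, w' j ≤ ∑ _j ∈ P, (1:ℝ) := Finset.sum_le_sum (fun j _ => (hw' j).2)
        _ = (P.card : ℝ) := by rw [Finset.sum_const, nsmul_eq_mul, mul_one]
    obtain ⟨j₀, hj₀Q, hj₀eq⟩ := hcQmem hQne
    have hcQpos : 0 < cQ := hj₀eq ▸ (hw j₀).1
    obtain ⟨jp, hjpP, hjpeq⟩ := hcPmem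
    have hcPpos : 0 < cP := hjpeq ▸ (hw jp).1
    obtain ⟨j₁, hj₁P, hj₁eq⟩ := hcPmem'
    have hcP'pos : 0 < cP' := hj₁eq ▸ (hw' j₁).1
    have hn0 : (n:ℝ) ≠ 0 := hnn.ne'
    have hdiv : ∀ x : ℝ, (n:ℝ) * (x/n) = x := fun x => by
      rw [mul_comm]; exact div_mul_cancel₀ x hn0
    have hRAs_n : (n:ℝ) * RAs = ((Pᶜ).card : ℝ) - (∑ j ∈ Pᶜ, w j) + cQ := by
      rw [hRAs, mul_add, mul_sub, mul_sub, mul_one, hdiv, hdiv, hdiv]; linarith [hcard]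
    have hRBs_n : (n:ℝ) * RBs = (P.card : ℝ) - (∑ j ∈ P, w j) + cP := by
      rw [hRBs, mul_add, mul_sub, mul_sub, mul_one, hdiv, hdiv, hdiv]; linarith [hcard]
    have hRBs'_n : (n:ℝ) * RBs' = (P.card : ℝ) - (∑ j ∈ P, w' j) + cP' := by
      rw [hRBs', mul_add, mul_sub, mul_sub, mul_one, hdiv, hdiv, hdiv]; linarith [hcard]
    have hmul_pos : ∀ y : ℝ, 0 < (n:ℝ) * y → 0 < y := fun y hy => by
      have h2 := div_pos hy hnn
      rwa [mul_div_cancel_left₀ y hn0] at h2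
    have hRAspos : 0 < RAs := hmul_pos _ (by linarith [hRAs_n, hQw_le, hcQpos])
    have hRBspos : 0 < RBs := hmul_pos _ (by linarith [hRBs_n, hPw_le, hcPpos])
    have hRBs'pos : 0 < RBs' := hmul_pos _ (by linarith [hRBs'_n, hPw'_le, hcP'pos])
    -- lower bounds on sums
    have hAP_ge : (P.card : ℝ)/n ≤ ∑ j ∈ P, sA j := by
      calc (P.card : ℝ)/n = ∑ _j ∈ P, (1:ℝ)/n := by
            rw [Finset.sum_const, nsmul_eq_mul]; ring
        _ ≤ ∑ j ∈ P, sA j := Finset.sum_le_sum (fun j hj => by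
            rw [(hP j hj).1]; exact le_max_left _ _)
    have hBQ'_ge : ((Pᶜ).card : ℝ)/n ≤ ∑ j ∈ Pᶜ, sB' j := by
      calc ((Pᶜ).card : ℝ)/n = ∑ _j ∈ Pᶜ, (1:ℝ)/n := by
            rw [Finset.sum_const, nsmul_eq_mul]; ring
        _ ≤ ∑ j ∈ Pᶜ, sB' j := Finset.sum_le_sum (fun j hj => by
            rw [(hQ' j hj).2]; exact le_max_left _ _)
    have hAPlt : ∑ j ∈ P, sA j < ∑ j ∈ P, sA' j := by
      have := sum_ge_add_of_mem (fun j hj => (hMONO_P j hj).1) hiP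
      linarith
    have haS_pos : 0 < ∑ j ∈ P, sA j - (P.card : ℝ)/n := by
      rcases (sub_nonneg.mpr hAP_ge).lt_or_eq with h | h
      · exact h
      · exfalso
        have h1 : (∑ j ∈ Pᶜ, sB j - ((Pᶜ).card : ℝ)/n) * RAs = 0 := by
          rw [← hcouple, ← h, zero_mul]
        have h2 : ∑ j ∈ Pᶜ, sB j - ((Pᶜ).card : ℝ)/n = 0 :=
          (mul_eq_zero.mp h1).resolve_right hRAspos.ne'
        linarith
    -- 8b : RBs' < RBs
    have h8b : RBs' < RBs := by
      have h1 : (∑ j ∈ P, sA' j - (P.card : ℝ)/n) * RBs'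
          < (∑ j ∈ P, sA j - (P.card : ℝ)/n) * RBs := by
        rw [hcouple, hcouple']
        exact mul_lt_mul_of_pos_right (by linarith) hRAspos
      have ha'pos : 0 < ∑ j ∈ P, sA' j - (P.card : ℝ)/n := by linarith
      have h2 : (∑ j ∈ P, sA j - (P.card : ℝ)/n) * RBs
          ≤ (∑ j ∈ P, sA' j - (P.card : ℝ)/n) * RBs :=
        mul_le_mul_of_nonneg_right (by linarith) hRBspos.le
      exact (mul_lt_mul_iff_right₀ ha'pos).mp (lt_of_lt_of_le h1 h2)
    -- 8c : e < e'
    have h8c : e < e' := by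
      by_contra h
      push_neg at h
      have hle : RBs ≤ RBs' := by
        have hcP'ge : cP ≤ cP' + (e - e') := by
          by_cases hj₁i : j₁ = i
          · have : cP' = e' := by rw [hj₁eq, hj₁i]
            have h2 : cP ≤ e := hcPlb i hiP
            linarith
          · have : cP' = w j₁ := by rw [hj₁eq, hagree j₁ hj₁i]
            have h2 : cP ≤ w j₁ := hcPlb j₁ hj₁P
            linarith
        have h3 : (e' - e)/n ≤ (cP' - cP)/n :=
          (div_le_div_iff_of_pos_right hnn).mpr (by linarith)
        linarith [hg_eq]
      exact absurd h8b (not_lt.mpr hle)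
    -- 8d : cP ≤ cP' hence RBs - RBs' ≤ (e'-e)/n
    have hcPcP' : cP ≤ cP' := by
      by_cases hj₁i : j₁ = i
      · have : cP' = e' := by rw [hj₁eq, hj₁i]
        linarith [hcPlb i hiP]
      · have : cP' = w j₁ := by rw [hj₁eq, hagree j₁ hj₁i]
        linarith [hcPlb j₁ hj₁P]
    have h8d : RBs - RBs' ≤ (e' - e)/n := by
      have : 0 ≤ (cP' - cP)/n := div_nonneg (by linarith) hnn.le
      linarith [hg_eq]
    -- 8e : coupling difference identity
    have h8e : (∑ j ∈ P, sA' j - ∑ j ∈ P, sA j) * RBs'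
        + (∑ j ∈ Pᶜ, sB j - ∑ j ∈ Pᶜ, sB' j) * RAs
        = (∑ j ∈ P, sA j - (P.card : ℝ)/n) * (RBs - RBs') := by
      linear_combination hcouple' - hcouple
    -- aS < RAs
    have haS_lt : ∑ j ∈ P, sA j - (P.card : ℝ)/n < RAs := by
      have hsplitA : ∑ j ∈ P, sA j + ∑ j ∈ Pᶜ, sA j = ∑ j, sA j :=
        Finset.sum_add_sum_compl P sA
      have hAQ_ge : (∑ j ∈ Pᶜ, w j)/n ≤ ∑ j ∈ Pᶜ, sA j := by
        rw [Finset.sum_div]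
        exact Finset.sum_le_sum (fun j hj => by
          rw [(hQ j hj).1]; exact le_max_left _ _)
      have : 0 < cQ/n := div_pos hcQpos hnn
      rw [hRAs]
      linarith [feasA]
    -- 8f : BQ - BQ' < (e'-e)/n
    have h8f : ∑ j ∈ Pᶜ, sB j - ∑ j ∈ Pᶜ, sB' j < (e' - e)/n := by
      have hδ1RBs' : 0 ≤ (∑ j ∈ P, sA' j - ∑ j ∈ P, sA j) * RBs' :=
        mul_nonneg (by linarith) hRBs'pos.le
      have h1 : (∑ j ∈ Pᶜ, sB j - ∑ j ∈ Pᶜ, sB' j) * RAs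
          ≤ (∑ j ∈ P, sA j - (P.card : ℝ)/n) * ((e' - e)/n) := by
        have := mul_le_mul_of_nonneg_left h8d haS_pos.le
        linarith [h8e]
      have h2 : (∑ j ∈ P, sA j - (P.card : ℝ)/n) * ((e' - e)/n)
          < RAs * ((e' - e)/n) :=
        mul_lt_mul_of_pos_right haS_lt (div_pos (by linarith) hnn)
      have h3 : (∑ j ∈ Pᶜ, sB j - ∑ j ∈ Pᶜ, sB' j) * RAs < ((e' - e)/n) * RAs := by
        rw [mul_comm ((e' - e)/n) RAs]; linarith
      exact (mul_lt_mul_iff_left₀ hRAspos).mp h3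
    -- useful strict facts
    have ht1'gt : e' * sA i < t1' := by
      rw [ht1'_eq]; exact (mul_lt_mul_iff_right₀ he'pos).mpr hxx
    rcases hfull with hfA | hfB
    · -- resource A full unprimed : the hard case
      -- hfA : ∑ univ sA = 1
      have hsplitA : ∑ j ∈ P, sA j + ∑ j ∈ Pᶜ, sA j = ∑ j, sA j :=
        Finset.sum_add_sum_compl P sA
      have hsplitA' : ∑ j ∈ P, sA' j + ∑ j ∈ Pᶜ, sA' j = ∑ j, sA' j :=
        Finset.sum_add_sum_compl P sA'
      -- δ1 ≤ AQ - AQ' ≤ δ2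
      have hdelta_le : ∑ j ∈ Pᶜ, sA j - ∑ j ∈ Pᶜ, sA' j
          ≤ ∑ j ∈ Pᶜ, sB j - ∑ j ∈ Pᶜ, sB' j := by
        rw [← Finset.sum_sub_distrib, ← Finset.sum_sub_distrib]
        apply Finset.sum_le_sum
        intro j hj
        rw [hQA_eq j hj, hQA'_eq j hj]
        have h1 : 0 ≤ sB j - sB' j := by linarith [hQdown j hj]
        have h2 : w j * (sB j - sB' j) ≤ 1 * (sB j - sB' j) :=
          mul_le_mul_of_nonneg_right (hw j).2 h1
        linarith [h2, mul_sub (w j) (sB j) (sB' j)]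
      have hdelta1_le : ∑ j ∈ P, sA' j - ∑ j ∈ P, sA j
          ≤ ∑ j ∈ Pᶜ, sA j - ∑ j ∈ Pᶜ, sA' j := by linarith [feasA', hfA]
      by_cases hR : ∃ k ∈ P.erase i, (1:ℝ)/n < sA k
      · obtain ⟨k, hk, hklt⟩ := hR
        have hkP := Finset.mem_of_mem_erase hk
        have hkne : k ≠ i := (Finset.mem_erase.mp hk).1
        have h1 : (1:ℝ)/n < t1 / w k := by
          by_contra h
          push_neg at h
          rw [(hP k hkP).1, max_eq_left h] at hklt
          exact lt_irrefl _ hklt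
        have hsk : sA k = t1 / w k := by rw [(hP k hkP).1, max_eq_right h1.le]
        have hsk' : sA' k = t1' / w k := by
          rw [(hP' k hkP).1, hagree k hkne, max_eq_right]
          exact le_of_lt (lt_trans h1 ((div_lt_div_iff_of_pos_right (hw k).1).mpr ht1t1'))
        have hdk : t1' - t1 ≤ sA' k - sA k := by
          rw [hsk, hsk', div_sub_div_same]
          have h2 : (t1' - t1) * w k ≤ (t1' - t1) * 1 :=
            mul_le_mul_of_nonneg_left (hw k).2 (by linarith)
          rw [le_div_iff₀ (hw k).1]
          linarith
        have hkey : (e' - e)/n < t1' - t1 := by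
          have h2 : (e' - e) * (1/(n:ℝ)) ≤ (e' - e) * sA i :=
            mul_le_mul_of_nonneg_left hx_ge (by linarith)
          have h3 : e' * sA i - e * sA i = (e' - e) * sA i := by ring
          have h4 : (e' - e) * (1/(n:ℝ)) = (e' - e)/n := by ring
          linarith [ht1'gt, ht1_le]
        have hsum2 := sum_ge_add_two_of_mem (f := sA) (g := sA')
          (fun j hj => (hMONO_P j hj).1) hiP hkP hkne
        linarith [hsum2, hdk, hkey, hdelta1_le, hdelta_le, h8f, hxx]
      · push_neg at hR
        have hconstP : ∀ k ∈ P.erase i, sA k = 1/n := by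
          intro k hk
          refine le_antisymm (hR k hk) ?_
          rw [(hP k (Finset.mem_of_mem_erase hk)).1]
          exact le_max_left _ _
        have hcard_erase : ((P.erase i).card : ℝ) = (P.card : ℝ) - 1 := by
          rw [Finset.card_erase_of_mem hiP]
          have : 1 ≤ P.card := Finset.card_pos.mpr ⟨i, hiP⟩
          push_cast [Nat.cast_sub this]
          ring
        have hAPval : ∑ j ∈ P, sA j = sA i + ((P.card : ℝ) - 1)/n := by
          rw [← Finset.add_sum_erase P sA hiP]
          have : ∑ j ∈ P.erase i, sA j = ∑ _j ∈ P.erase i, (1:ℝ)/n :=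
            Finset.sum_congr rfl hconstP
          rw [this, Finset.sum_const, nsmul_eq_mul, hcard_erase]
          ring
        have hx_gt : (1:ℝ)/n < sA i := by
          have : ∑ j ∈ P, sA j - (P.card : ℝ)/n = sA i - 1/n := by
            rw [hAPval]; ring
          linarith [haS_pos]
        have hx_val : sA i = t1 / e := by
          rw [hx_eq] at hx_gt ⊢
          rcases max_cases ((1:ℝ)/n) (t1 / e) with ⟨h, _⟩ | ⟨h, _⟩
          · rw [h] at hx_gt; exact absurd hx_gt (lt_irrefl _)
          · rw [h]
        have ht1_eq : t1 = e * sA i := by rw [hx_val, mul_div_cancel₀ _ hepos.ne']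
        have hwk_ge : ∀ k ∈ P.erase i, (n:ℝ) * t1 ≤ w k := by
          intro k hk
          have h1 : t1 / w k ≤ 1/n := by
            by_contra h
            push_neg at h
            have h2 : sA k = t1 / w k := by
              rw [(hP k (Finset.mem_of_mem_erase hk)).1, max_eq_right h.le]
            linarith [hR k hk, h2 ▸ h]
          have h2 := (div_le_div_iff₀ (hw k).1 hnn).mp h1
          linarith
        have hcP_eq : cP = e := by
          by_cases hjpi : jp = i
          · rw [hjpeq, hjpi]
          · exfalso
            have h1 := hwk_ge jp (Finset.mem_erase.mpr ⟨hjpi, hjpP⟩)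
            have h2 : 1 < (n:ℝ) * sA i := by
              have := (div_lt_iff₀ hnn).mp hx_gt
              linarith
            have h3 : e * 1 < e * ((n:ℝ) * sA i) := (mul_lt_mul_iff_right₀ hepos).mpr h2
            have h4 : (n:ℝ) * t1 = e * ((n:ℝ) * sA i) := by rw [ht1_eq]; ring
            have h5 : cP ≤ e := hcPlb i hiP
            rw [hjpeq] at h5
            linarith
        by_cases hj₁i : j₁ = i
        · -- cP' = e' : g = 0, contradiction since LHS of 8e is positive
          have hcP'_eq : cP' = e' := by rw [hj₁eq, hj₁i]
          have hg0 : RBs - RBs' = 0 := by rw [hg_eq, hcP_eq, hcP'_eq]; ring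
          have hpos1 : 0 < (∑ j ∈ P, sA' j - ∑ j ∈ P, sA j) * RBs' :=
            mul_pos (by linarith) hRBs'pos
          have hpos2 : 0 < (∑ j ∈ Pᶜ, sB j - ∑ j ∈ Pᶜ, sB' j) * RAs :=
            mul_pos (by linarith) hRAspos
          rw [hg0, mul_zero] at h8e
          linarith
        · -- j₁ ≠ i : final computation
          have hm_eq : cP' = w j₁ := by rw [hj₁eq, hagree j₁ hj₁i]
          have hmle1 : cP' ≤ 1 := hm_eq ▸ (hw j₁).2
          have hm_le_e' : cP' ≤ e' := hcPlb' i hiP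
          have hg_val : RBs - RBs' = (e' - cP')/n := by
            rw [hg_eq, hcP_eq]; ring
          have hnRBs' : 1 ≤ (n:ℝ) * RBs' := by
            have hsum_le : ∑ j ∈ P, w' j ≤ ((P.card:ℝ) - 1) + cP' := by
              rw [← Finset.add_sum_erase P w' hj₁P]
              have h1 : ∑ j ∈ P.erase j₁, w' j ≤ ((P.erase j₁).card : ℝ) := by
                calc ∑ j ∈ P.erase j₁, w' j ≤ ∑ _j ∈ P.erase j₁, (1:ℝ) :=
                      Finset.sum_le_sum (fun j _ => (hw' j).2)
                  _ = ((P.erase j₁).card : ℝ) := by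
                      rw [Finset.sum_const, nsmul_eq_mul, mul_one]
              have h2 : ((P.erase j₁).card : ℝ) = (P.card : ℝ) - 1 := by
                rw [Finset.card_erase_of_mem hj₁P]
                have : 1 ≤ P.card := Finset.card_pos.mpr ⟨j₁, hj₁P⟩
                push_cast [Nat.cast_sub this]
                ring
              rw [← hj₁eq] at *
              linarith [h1, h2]
            linarith [hRBs'_n, hsum_le, hcard]
          -- j₁ raised primed
          have hmx : cP' * sA i ≤ e' * sA i :=
            mul_le_mul_of_nonneg_right hm_le_e'
              (le_trans (by positivity : (0:ℝ) ≤ 1/(n:ℝ)) hx_ge)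
          have hmn : cP' * (1/(n:ℝ)) < cP' * sA i :=
            (mul_lt_mul_iff_right₀ hcP'pos).mpr hx_gt
          have ht1'm : (1:ℝ)/n < t1' / cP' := by
            rw [lt_div_iff₀ hcP'pos]
            have : cP' * (1/(n:ℝ)) = 1/(n:ℝ) * cP' := by ring
            linarith [hmx, hmn, ht1'gt]
          have hsAj₁' : sA' j₁ = t1' / cP' := by
            rw [(hP' j₁ hj₁P).1, ← hj₁eq, max_eq_right ht1'm.le]
          have hsAj₁ : sA j₁ = 1/n := hconstP j₁ (Finset.mem_erase.mpr ⟨hj₁i, hj₁P⟩)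
          -- upper bound on δ1
          have hup : (∑ j ∈ P, sA' j - ∑ j ∈ P, sA j) * RBs'
              < (sA i - 1/n) * ((e' - cP')/n) := by
            have hpos2 : 0 < (∑ j ∈ Pᶜ, sB j - ∑ j ∈ Pᶜ, sB' j) * RAs :=
              mul_pos (by linarith) hRAspos
            have haS_eq : ∑ j ∈ P, sA j - (P.card : ℝ)/n = sA i - 1/n := by
              rw [hAPval]; ring
            rw [hg_val, haS_eq] at h8e
            linarith
          have hδ1_pos : 0 < ∑ j ∈ P, sA' j - ∑ j ∈ P, sA j := by linarith
          have hδ1_lt : ∑ j ∈ P, sA' j - ∑ j ∈ P, sA j < (sA i - 1/n) * (e' - cP') := by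
            have h3 : (∑ j ∈ P, sA' j - ∑ j ∈ P, sA j) * 1
                ≤ (∑ j ∈ P, sA' j - ∑ j ∈ P, sA j) * ((n:ℝ) * RBs') :=
              mul_le_mul_of_nonneg_left hnRBs' hδ1_pos.le
            have h4 : (∑ j ∈ P, sA' j - ∑ j ∈ P, sA j) * ((n:ℝ) * RBs')
                = (n:ℝ) * ((∑ j ∈ P, sA' j - ∑ j ∈ P, sA j) * RBs') := by ring
            have h5 : (n:ℝ) * ((∑ j ∈ P, sA' j - ∑ j ∈ P, sA j) * RBs')
                < (n:ℝ) * ((sA i - 1/n) * ((e' - cP')/n)) :=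
              (mul_lt_mul_iff_right₀ hnn).mpr hup
            have h6 : (n:ℝ) * ((sA i - 1/n) * ((e' - cP')/n))
                = (sA i - 1/n) * (e' - cP') := by
              field_simp
            linarith
          -- lower bound on δ1
          have hlow : e' * sA i / cP' - 1/n < ∑ j ∈ P, sA' j - ∑ j ∈ P, sA j := by
            have hsum2 := sum_ge_add_two_of_mem (f := sA) (g := sA')
              (fun j hj => (hMONO_P j hj).1) hiP hj₁P hj₁i
            have h7 : e' * sA i / cP' < t1' / cP' :=
              (div_lt_div_iff_of_pos_right hcP'pos).mpr ht1'gt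
            rw [hsAj₁', hsAj₁] at hsum2
            linarith [hxx]
          -- final arithmetic contradiction
          have hfinal : (sA i - 1/n) * (e' - cP') ≤ e' * sA i / cP' - 1/n := by
            have hkey : cP' * ((sA i - 1/n) * (e' - cP') + 1/n) ≤ e' * sA i :=
              final_arith_aux (x := sA i) (m := cP') (ep := e') (c := 1/(n:ℝ))
                (by positivity) hx_gt.le hcP'pos hmle1 hm_le_e' 
            have h8 : (sA i - 1/n) * (e' - cP') + 1/n ≤ e' * sA i / cP' := by
              rw [le_div_iff₀ hcP'pos]
              linarith [hkey]
            linarith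
          linarith [hδ1_lt, hlow, hfinal]
    · -- resource B full unprimed
      have hz_diff : (e' - e)/n < sB' i - sB i := by
        have h1 : e' * sA i < e' * sA' i := (mul_lt_mul_iff_right₀ he'pos).mpr hxx
        have h2 : 0 ≤ (e' - e) * (sA i - 1/n) :=
          mul_nonneg (by linarith) (by linarith)
        have h3 : (0:ℝ) < n := hnn
        rw [hzx, hzx']
        have h4 : (e' - e) * (1/(n:ℝ)) ≤ (e' - e) * sA i :=
          mul_le_mul_of_nonneg_left hx_ge (by linarith)
        have h5 : e' * sA i - e * sA i = (e' - e) * sA i := by ring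
        have h6 : (e' - e) * (1/(n:ℝ)) = (e' - e)/n := by ring
        linarith
      have hBP_ge := sum_ge_add_of_mem (fun j hj => (hMONO_P j hj).2) hiP
      have hsplitB : ∑ j ∈ P, sB j + ∑ j ∈ Pᶜ, sB j = ∑ j, sB j :=
        Finset.sum_add_sum_compl P sB
      have hsplitB' : ∑ j ∈ P, sB' j + ∑ j ∈ Pᶜ, sB' j = ∑ j, sB' j :=
        Finset.sum_add_sum_compl P sB'
      linarith [feasB', h8f, hz_diff, hBP_ge, hfB]

end NoBothUp
section Bridge

variable {n : ℕ}

/-- The weight of an agent: its non-dominant demand (resource 2 demand for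
agents in `G1`, resource 1 demand for agents in `G2`). -/
noncomputable def wfun (d : Fin n → Fin 2 → ℝ) : Fin n → ℝ :=
  fun j => if d j 0 = 1 then d j 1 else d j 0

lemma wfun_pos {d : Fin n → Fin 2 → ℝ} (hv : ValidInstance d) :
    ∀ j, 0 < wfun d j ∧ wfun d j ≤ 1 := by
  intro j
  unfold wfun
  split
  · exact ⟨(hv.1 j 1).1, (hv.1 j 1).2⟩
  · exact ⟨(hv.1 j 0).1, (hv.1 j 0).2⟩

lemma wfun_G1 {d : Fin n → Fin 2 → ℝ} {j : Fin n} (hj : d j 0 = 1) :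
    wfun d j = d j 1 := if_pos hj

lemma wfun_G2 {d : Fin n → Fin 2 → ℝ} {j : Fin n} (hj : d j 0 < 1) :
    wfun d j = d j 0 := if_neg (ne_of_lt hj)

lemma valid_dom {d : Fin n → Fin 2 → ℝ} (hv : ValidInstance d) {i : Fin n}
    (h : d i 0 < 1) : d i 1 = 1 := by
  obtain ⟨r, hr⟩ := hv.2 i
  fin_cases r
  · exact absurd hr (ne_of_lt h)
  · exact hr

lemma mem_G1_iff {d : Fin n → Fin 2 → ℝ} {j : Fin n} :
    j ∈ G1 d ↔ d j 0 = 1 := by simp [G1]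

lemma mem_G2_iff {d : Fin n → Fin 2 → ℝ} {j : Fin n} :
    j ∈ G2 d ↔ d j 0 < 1 := by simp [G2]

lemma G2_eq_compl {d : Fin n → Fin 2 → ℝ} (hv : ValidInstance d) :
    G2 d = (G1 d)ᶜ := by
  ext j
  rw [Finset.mem_compl, mem_G1_iff, mem_G2_iff]
  exact ⟨fun h => ne_of_lt h, fun h => lt_of_le_of_ne (hv.1 j 0).2 h⟩

lemma not_mem_G1 {d : Fin n → Fin 2 → ℝ} (hv : ValidInstance d) {j : Fin n}
    (h : j ∉ G1 d) : d j 0 < 1 :=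
  lt_of_le_of_ne (hv.1 j 0).2 (fun he => h (mem_G1_iff.mpr he))

lemma shares_G1 {d A : Fin n → Fin 2 → ℝ} {t1 t2 : ℝ} (hv : ValidInstance d)
    (hwf : Waterfill d A t1 t2) {j : Fin n} (hj : d j 0 = 1) :
    A j 0 = max ((1:ℝ)/n) (t1 / wfun d j) ∧ A j 1 = max (wfun d j / n) t1 := by
  obtain ⟨h1, h2⟩ := (hwf j).1 hj
  rw [wfun_G1 hj]
  refine ⟨?_, h1⟩
  rw [h2, h1, max_div_aux (hv.1 j 1).1]

lemma shares_G2 {d A : Fin n → Fin 2 → ℝ} {t1 t2 : ℝ} (hv : ValidInstance d)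
    (hwf : Waterfill d A t1 t2) {j : Fin n} (hj : d j 0 < 1) :
    A j 1 = max ((1:ℝ)/n) (t2 / wfun d j) ∧ A j 0 = max (wfun d j / n) t2 := by
  obtain ⟨h1, h2⟩ := (hwf j).2 hj
  rw [wfun_G2 hj]
  refine ⟨?_, h1⟩
  rw [h2, h1, max_div_aux (hv.1 j 0).1]

/-- The infimum appearing in `R1s`. -/
noncomputable def cQfun (d : Fin n → Fin 2 → ℝ) : ℝ :=
  sInf ((fun i => d i 0) '' {i : Fin n | d i 0 < 1})

/-- The infimum appearing in `R2s`. -/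
noncomputable def cPfun (d : Fin n → Fin 2 → ℝ) : ℝ :=
  sInf ((fun i => d i 1) '' {i : Fin n | d i 0 = 1})

lemma cQ_mem {d : Fin n → Fin 2 → ℝ} (hne : (G2 d).Nonempty) :
    ∃ j ∈ G2 d, cQfun d = d j 0 := by
  obtain ⟨j₀, hj₀⟩ := hne
  have hne' : ((fun i => d i 0) '' {i : Fin n | d i 0 < 1}).Nonempty :=
    ⟨d j₀ 0, j₀, mem_G2_iff.mp hj₀, rfl⟩
  obtain ⟨j, hj, hjeq⟩ := hne'.csInf_mem (Set.toFinite _)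
  exact ⟨j, mem_G2_iff.mpr hj, hjeq.symm⟩

lemma cQ_lb {d : Fin n → Fin 2 → ℝ} {j : Fin n} (hj : j ∈ G2 d) :
    cQfun d ≤ d j 0 :=
  csInf_le (Set.Finite.bddBelow (Set.toFinite _)) ⟨j, mem_G2_iff.mp hj, rfl⟩

lemma cP_mem {d : Fin n → Fin 2 → ℝ} (hne : (G1 d).Nonempty) :
    ∃ j ∈ G1 d, cPfun d = d j 1 := by
  obtain ⟨j₀, hj₀⟩ := hne
  have hne' : ((fun i => d i 1) '' {i : Fin n | d i 0 = 1}).Nonempty :=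
    ⟨d j₀ 1, j₀, mem_G1_iff.mp hj₀, rfl⟩
  obtain ⟨j, hj, hjeq⟩ := hne'.csInf_mem (Set.toFinite _)
  exact ⟨j, mem_G1_iff.mpr hj, hjeq.symm⟩

lemma cP_lb {d : Fin n → Fin 2 → ℝ} {j : Fin n} (hj : j ∈ G1 d) :
    cPfun d ≤ d j 1 :=
  csInf_le (Set.Finite.bddBelow (Set.toFinite _)) ⟨j, mem_G1_iff.mp hj, rfl⟩

lemma R1s_eq (d : Fin n → Fin 2 → ℝ) :
    R1s d = 1 - ((G1 d).card : ℝ)/n - (∑ j ∈ G2 d, wfun d j)/n + cQfun d / n := by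
  have hsum : ∑ j ∈ G2 d, wfun d j = ∑ j ∈ G2 d, d j 0 :=
    Finset.sum_congr rfl (fun j hj => wfun_G2 (mem_G2_iff.mp hj))
  rw [R1s, R1, hsum, cQfun]

lemma R2s_eq (d : Fin n → Fin 2 → ℝ) :
    R2s d = 1 - ((G2 d).card : ℝ)/n - (∑ j ∈ G1 d, wfun d j)/n + cPfun d / n := by
  have hsum : ∑ j ∈ G1 d, wfun d j = ∑ j ∈ G1 d, d j 1 :=
    Finset.sum_congr rfl (fun j hj => wfun_G1 (mem_G1_iff.mp hj))
  rw [R2s, R2, hsum, cPfun]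

lemma util_self_G1 {d A : Fin n → Fin 2 → ℝ} {t1 t2 : ℝ} (hv : ValidInstance d)
    (hwf : Waterfill d A t1 t2) (hA : NonnegAlloc A) {j : Fin n} (hj : d j 0 = 1) :
    util (d j) (A j) = A j 0 := by
  obtain ⟨h1, h2⟩ := (hwf j).1 hj
  rw [util_eq_min (hv.1 j 0).1 (hv.1 j 1).1 (hA j 0) (hA j 1), hj, div_one, ← h2,
    min_self]

lemma util_self_G2 {d A : Fin n → Fin 2 → ℝ} {t1 t2 : ℝ} (hv : ValidInstance d)
    (hwf : Waterfill d A t1 t2) (hA : NonnegAlloc A) {j : Fin n} (hj : d j 0 < 1) :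
    util (d j) (A j) = A j 1 := by
  obtain ⟨h1, h2⟩ := (hwf j).2 hj
  rw [util_eq_min (hv.1 j 0).1 (hv.1 j 1).1 (hA j 0) (hA j 1), valid_dom hv hj,
    div_one, ← h2, min_self]

lemma t2_cap {d A : Fin n → Fin 2 → ℝ} {t1 t2 : ℝ} (hn : 0 < n)
    (hv : ValidInstance d) (hwf : Waterfill d A t1 t2) (hfeas : Feasible A)
    (hne : (G2 d).Nonempty) : t2 ≤ 1/n := by
  refine level_cap hn (G1 d) (fun j => A j 0) t2 ?_ ?_ ?_ (hfeas.2 0)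
  · intro j hj
    show (1:ℝ)/n ≤ A j 0
    rw [(shares_G1 hv hwf (mem_G1_iff.mp hj)).1]
    exact le_max_left _ _
  · intro j hj
    show t2 ≤ A j 0
    rw [(shares_G2 hv hwf (not_mem_G1 hv hj)).2]
    exact le_max_right _ _
  · obtain ⟨j, hj⟩ := hne
    exact ⟨j, fun hj1 => absurd (mem_G1_iff.mp hj1) (ne_of_lt (mem_G2_iff.mp hj))⟩

lemma t1_cap {d A : Fin n → Fin 2 → ℝ} {t1 t2 : ℝ} (hn : 0 < n)
    (hv : ValidInstance d) (hwf : Waterfill d A t1 t2) (hfeas : Feasible A)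
    (hne : (G1 d).Nonempty) : t1 ≤ 1/n := by
  refine level_cap hn (G2 d) (fun j => A j 1) t1 ?_ ?_ ?_ (hfeas.2 1)
  · intro j hj
    show (1:ℝ)/n ≤ A j 1
    rw [(shares_G2 hv hwf (mem_G2_iff.mp hj)).1]
    exact le_max_left _ _
  · intro j hj
    have hj1 : d j 0 = 1 := by
      by_contra h
      exact hj (mem_G2_iff.mpr (lt_of_le_of_ne (hv.1 j 0).2 h))
    show t1 ≤ A j 1
    rw [(shares_G1 hv hwf hj1).2]
    exact le_max_right _ _
  · obtain ⟨j, hj⟩ := hne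
    exact ⟨j, fun hj2 => absurd (mem_G1_iff.mp hj) (ne_of_lt (mem_G2_iff.mp hj2))⟩

end Bridge
section Part1

variable {n : ℕ}

lemma f2s_SI {d A : Fin n → Fin 2 → ℝ} {t1 t2 : ℝ}
    (hv : ValidInstance d) (hwf : Waterfill d A t1 t2) (hfeas : Feasible A) :
    SI d A := by
  intro i
  rcases ((hv.1 i 0).2).lt_or_eq with hi | hi
  · rw [util_self_G2 hv hwf hfeas.1 hi, (shares_G2 hv hwf hi).1]
    exact le_max_left _ _
  · rw [util_self_G1 hv hwf hfeas.1 hi, (shares_G1 hv hwf hi).1]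
    exact le_max_left _ _

lemma f2s_EF {d A : Fin n → Fin 2 → ℝ} {t1 t2 : ℝ} (hn : 0 < n)
    (hv : ValidInstance d) (hwf : Waterfill d A t1 t2) (hfeas : Feasible A) :
    EF d A := by
  have hnn : (0:ℝ) < n := by exact_mod_cast hn
  intro i j
  have hmin : util (d i) (A j) = min (A j 0 / d i 0) (A j 1 / d i 1) :=
    util_eq_min (hv.1 i 0).1 (hv.1 i 1).1 (hfeas.1 j 0) (hfeas.1 j 1)
  rcases ((hv.1 i 0).2).lt_or_eq with hi | hi
  · -- i ∈ G2
    have hdi1 : d i 1 = 1 := valid_dom hv hi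
    have hii : A i 1 = max ((1:ℝ)/n) (t2 / d i 0) := by
      have := (shares_G2 hv hwf hi).1; rwa [wfun_G2 hi] at this
    rw [util_self_G2 hv hwf hfeas.1 hi, hmin]
    rcases ((hv.1 j 0).2).lt_or_eq with hj | hj
    · -- j ∈ G2
      have hj0 : A j 0 = max (d j 0 / n) t2 := by
        have := (shares_G2 hv hwf hj).2; rwa [wfun_G2 hj] at this
      have hj1 : A j 1 = max ((1:ℝ)/n) (t2 / d j 0) := by
        have := (shares_G2 hv hwf hj).1; rwa [wfun_G2 hj] at this
      rcases le_total (t2 / d j 0) ((1:ℝ)/n) with h | h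
      · calc min (A j 0 / d i 0) (A j 1 / d i 1) ≤ A j 1 / d i 1 := min_le_right _ _
          _ = (1:ℝ)/n := by rw [hdi1, div_one, hj1, max_eq_left h]
          _ ≤ A i 1 := by rw [hii]; exact le_max_left _ _
      · have h2 : d j 0 / n ≤ t2 := by
          rw [div_le_iff₀ hnn]
          have := (div_le_div_iff₀ hnn (hv.1 j 0).1).mp h
          linarith
        calc min (A j 0 / d i 0) (A j 1 / d i 1) ≤ A j 0 / d i 0 := min_le_left _ _
          _ = t2 / d i 0 := by rw [hj0, max_eq_right h2]
          _ ≤ A i 1 := by rw [hii]; exact le_max_right _ _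
    · -- j ∈ G1
      have hj1 : A j 1 = max (d j 1 / n) t1 := by
        have := (shares_G1 hv hwf hj).2; rwa [wfun_G1 hj] at this
      have hcap := t1_cap hn hv hwf hfeas ⟨j, mem_G1_iff.mpr hj⟩
      have h1 : d j 1 / n ≤ 1/n := (div_le_div_iff_of_pos_right hnn).mpr (hv.1 j 1).2
      calc min (A j 0 / d i 0) (A j 1 / d i 1) ≤ A j 1 / d i 1 := min_le_right _ _
        _ = A j 1 := by rw [hdi1, div_one]
        _ ≤ (1:ℝ)/n := by rw [hj1]; exact max_le h1 hcap
        _ ≤ A i 1 := by rw [hii]; exact le_max_left _ _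
  · -- i ∈ G1
    have hii : A i 0 = max ((1:ℝ)/n) (t1 / d i 1) := by
      have := (shares_G1 hv hwf hi).1; rwa [wfun_G1 hi] at this
    rw [util_self_G1 hv hwf hfeas.1 hi, hmin]
    rcases ((hv.1 j 0).2).lt_or_eq with hj | hj
    · -- j ∈ G2
      have hj0 : A j 0 = max (d j 0 / n) t2 := by
        have := (shares_G2 hv hwf hj).2; rwa [wfun_G2 hj] at this
      have hcap := t2_cap hn hv hwf hfeas ⟨j, mem_G2_iff.mpr hj⟩
      have h1 : d j 0 / n ≤ 1/n := (div_le_div_iff_of_pos_right hnn).mpr (hv.1 j 0).2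
      calc min (A j 0 / d i 0) (A j 1 / d i 1) ≤ A j 0 / d i 0 := min_le_left _ _
        _ = A j 0 := by rw [hi, div_one]
        _ ≤ (1:ℝ)/n := by rw [hj0]; exact max_le h1 hcap
        _ ≤ A i 0 := by rw [hii]; exact le_max_left _ _
    · -- j ∈ G1
      have hj0 : A j 0 = max ((1:ℝ)/n) (t1 / d j 1) := by
        have := (shares_G1 hv hwf hj).1; rwa [wfun_G1 hj] at this
      have hj1 : A j 1 = max (d j 1 / n) t1 := by
        have := (shares_G1 hv hwf hj).2; rwa [wfun_G1 hj] at this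
      rcases le_total (t1 / d j 1) ((1:ℝ)/n) with h | h
      · calc min (A j 0 / d i 0) (A j 1 / d i 1) ≤ A j 0 / d i 0 := min_le_left _ _
          _ = (1:ℝ)/n := by rw [hi, div_one, hj0, max_eq_left h]
          _ ≤ A i 0 := by rw [hii]; exact le_max_left _ _
      · have h2 : d j 1 / n ≤ t1 := by
          rw [div_le_iff₀ hnn]
          have := (div_le_div_iff₀ hnn (hv.1 j 1).1).mp h
          linarith
        calc min (A j 0 / d i 0) (A j 1 / d i 1) ≤ A j 1 / d i 1 := min_le_right _ _
          _ = t1 / d i 1 := by rw [hj1, max_eq_right h2]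
          _ ≤ A i 0 := by rw [hii]; exact le_max_right _ _

lemma f2s_PO {d A : Fin n → Fin 2 → ℝ} {t1 t2 : ℝ}
    (hv : ValidInstance d) (hwf : Waterfill d A t1 t2) (hfeas : Feasible A)
    (hfull : ∃ r, ∑ i, A i r = 1) : PO d A := by
  rintro ⟨A', hA'feas, hge, k, hk⟩
  obtain ⟨r, hr⟩ := hfull
  have hAud : ∀ i, util (d i) (A i) * d i r = A i r := by
    intro i
    rcases ((hv.1 i 0).2).lt_or_eq with hi | hi
    · obtain ⟨h1, h2⟩ := (hwf i).2 hi
      rw [util_self_G2 hv hwf hfeas.1 hi]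
      fin_cases r
      · show A i 1 * d i 0 = A i 0
        rw [h2, div_mul_cancel₀ _ (hv.1 i 0).1.ne']
      · show A i 1 * d i 1 = A i 1
        rw [valid_dom hv hi, mul_one]
    · obtain ⟨h1, h2⟩ := (hwf i).1 hi
      rw [util_self_G1 hv hwf hfeas.1 hi]
      fin_cases r
      · show A i 0 * d i 0 = A i 0
        rw [hi, mul_one]
      · show A i 0 * d i 1 = A i 1
        rw [h2, div_mul_cancel₀ _ (hv.1 i 1).1.ne']
  have hub : ∀ i, util (d i) (A' i) * d i r ≤ A' i r := by
    intro i
    have hmin : util (d i) (A' i) = min (A' i 0 / d i 0) (A' i 1 / d i 1) :=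
      util_eq_min (hv.1 i 0).1 (hv.1 i 1).1 (hA'feas.1 i 0) (hA'feas.1 i 1)
    have h1 : util (d i) (A' i) ≤ A' i r / d i r := by
      rw [hmin]
      fin_cases r
      · exact min_le_left _ _
      · exact min_le_right _ _
    calc util (d i) (A' i) * d i r ≤ (A' i r / d i r) * d i r :=
          mul_le_mul_of_nonneg_right h1 (hv.1 i r).1.le
      _ = A' i r := div_mul_cancel₀ _ (hv.1 i r).1.ne'
  have hstrict : ∑ i, util (d i) (A i) * d i r < ∑ i, util (d i) (A' i) * d i r :=
    Finset.sum_lt_sum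
      (fun i _ => mul_le_mul_of_nonneg_right (hge i) (hv.1 i r).1.le)
      ⟨k, Finset.mem_univ k, mul_lt_mul_of_pos_right hk (hv.1 k r).1⟩
  have h2 : ∑ i, util (d i) (A i) * d i r = ∑ i, A i r :=
    Finset.sum_congr rfl (fun i _ => hAud i)
  have h3 : ∑ i, util (d i) (A' i) * d i r ≤ ∑ i, A' i r :=
    Finset.sum_le_sum (fun i _ => hub i)
  have h4 := hA'feas.2 r
  rw [h2, hr] at hstrict
  linarith

end Part1
section Part2

variable {n : ℕ}

lemma wfun_agree {d d' : Fin n → Fin 2 → ℝ} {i : Fin n}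
    (hdiff : ∀ j, j ≠ i → d' j = d j) :
    ∀ j, j ≠ i → wfun d' j = wfun d j := by
  intro j hj
  unfold wfun
  rw [hdiff j hj]

lemma f2s_SP (hn : 0 < n) (d d' : Fin n → Fin 2 → ℝ) (i : Fin n)
    (hv : ValidInstance d) (hv' : ValidInstance d')
    (hdiff : ∀ j, j ≠ i → d' j = d j)
    (A A' : Fin n → Fin 2 → ℝ) (hA : IsF2sAlloc d A) (hA' : IsF2sAlloc d' A') :
    util (d i) (A' i) ≤ util (d i) (A i) := by
  obtain ⟨t1, t2, ht1, ht2, hwf, hcpl, hfeas, hfull⟩ := hA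
  obtain ⟨t1', t2', ht1', ht2', hwf', hcpl', hfeas', hfull'⟩ := hA'
  have hnn : (0:ℝ) < n := by exact_mod_cast hn
  by_contra hcon
  push_neg at hcon
  have hminA' : util (d i) (A' i) = min (A' i 0 / d i 0) (A' i 1 / d i 1) :=
    util_eq_min (hv.1 i 0).1 (hv.1 i 1).1 (hfeas'.1 i 0) (hfeas'.1 i 1)
  have hfullOr : (∑ j, A j 0) = 1 ∨ (∑ j, A j 1) = 1 := by
    obtain ⟨r, hr⟩ := hfull
    fin_cases r
    · exact Or.inl hr
    · exact Or.inr hr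
  rcases ((hv.1 i 0).2).lt_or_eq with hi | hi
  · -- true type in G2
    have hutilA : util (d i) (A i) = A i 1 := util_self_G2 hv hwf hfeas.1 hi
    have hdi1 : d i 1 = 1 := valid_dom hv hi
    rcases ((hv'.1 i 0).2).lt_or_eq with hi' | hi'
    · -- reported type in G2 : same-group case, orientation 2
      have hiG2 : i ∈ G2 d := mem_G2_iff.mpr hi
      have hG2 : G2 d' = G2 d := by
        ext j
        rw [mem_G2_iff, mem_G2_iff]
        by_cases hj : j = i
        · subst hj; exact iff_of_true hi' hi
        · rw [hdiff j hj]
      have hG1c : G1 d = (G2 d)ᶜ := by rw [G2_eq_compl hv, compl_compl]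
      have hG1c' : G1 d' = (G2 d')ᶜ := by rw [G2_eq_compl hv', compl_compl]
      have hG1 : G1 d' = G1 d := by rw [hG1c', hG2, ← hG1c]
      have hmemQ : ∀ j ∈ (G2 d)ᶜ, d j 0 = 1 := by
        intro j hj
        by_contra h
        exact (Finset.mem_compl.mp hj)
          (mem_G2_iff.mpr (lt_of_le_of_ne (hv.1 j 0).2 h))
      have hmemQ' : ∀ j ∈ (G2 d)ᶜ, d' j 0 = 1 := by
        intro j hj
        have hj' : j ∉ G2 d' := by rw [hG2]; exact Finset.mem_compl.mp hj
        by_contra h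
        exact hj' (mem_G2_iff.mpr (lt_of_le_of_ne (hv'.1 j 0).2 h))
      have hneQ : ∀ j ∈ (G2 d)ᶜ, j ≠ i :=
        fun j hj hrfl => (Finset.mem_compl.mp hj) (hrfl ▸ hiG2)
      -- R2s is unchanged
      have hR2s : R2s d' = R2s d := by
        have hR2 : R2 d' = R2 d := by
          have hsum : ∑ j ∈ G1 d, d' j 1 = ∑ j ∈ G1 d, d j 1 :=
            Finset.sum_congr rfl (fun j hj => by
              rw [hdiff j (hneQ j (by rw [← hG1c]; exact hj))])
          rw [R2, R2, hG1, hG2, hsum]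
        have hsets : {j : Fin n | d' j 0 = 1} = {j : Fin n | d j 0 = 1} := by
          ext j
          by_cases hj : j = i
          · subst hj
            simp only [Set.mem_setOf_eq]
            exact iff_of_false (fun h => absurd h (ne_of_lt hi'))
              (fun h => absurd h (ne_of_lt hi))
          · simp only [Set.mem_setOf_eq, hdiff j hj]
        have himg : (fun j => d' j 1) '' {j : Fin n | d' j 0 = 1}
            = (fun j => d j 1) '' {j : Fin n | d j 0 = 1} := by
          rw [hsets]
          refine Set.image_congr (fun x hx => ?_)
          have hxi : x ≠ i := by
            intro hrfl
            rw [hrfl] at hx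
            exact (ne_of_lt hi) hx
          rw [hdiff x hxi]
        rw [R2s, R2s, hR2, himg]
      -- data for no_both_up (orientation 2 : P = G2 d)
      have hcPmem : ∃ j ∈ G2 d, cQfun d = wfun d j := by
        obtain ⟨j, hj, heq⟩ := cQ_mem ⟨i, hiG2⟩
        exact ⟨j, hj, by rw [heq, wfun_G2 (mem_G2_iff.mp hj)]⟩
      have hcPlb : ∀ j ∈ G2 d, cQfun d ≤ wfun d j := fun j hj => by
        rw [wfun_G2 (mem_G2_iff.mp hj)]; exact cQ_lb hj
      have hcPmem' : ∃ j ∈ G2 d, cQfun d' = wfun d' j := by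
        obtain ⟨j, hj, heq⟩ := cQ_mem (d := d') ⟨i, hG2 ▸ hiG2⟩
        exact ⟨j, hG2 ▸ hj, by rw [heq, wfun_G2 (mem_G2_iff.mp hj)]⟩
      have hcPlb' : ∀ j ∈ G2 d, cQfun d' ≤ wfun d' j := fun j hj => by
        have hj' : j ∈ G2 d' := hG2 ▸ hj
        rw [wfun_G2 (mem_G2_iff.mp hj')]; exact cQ_lb hj'
      have hcQmem : (G2 d)ᶜ.Nonempty → ∃ j ∈ (G2 d)ᶜ, cPfun d = wfun d j := by
        rintro ⟨j₀, hj₀⟩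
        obtain ⟨j, hj, heq⟩ := cP_mem (d := d) ⟨j₀, hG1c ▸ hj₀⟩
        exact ⟨j, hG1c ▸ hj, by rw [heq, wfun_G1 (mem_G1_iff.mp hj)]⟩
      have hcQlb : ∀ j ∈ (G2 d)ᶜ, cPfun d ≤ wfun d j := fun j hj => by
        have hj1 : j ∈ G1 d := hG1c ▸ hj
        rw [wfun_G1 (mem_G1_iff.mp hj1)]; exact cP_lb hj1
      have hRAs : R2s d = 1 - ((G2 d).card : ℝ)/n - (∑ j ∈ (G2 d)ᶜ, wfun d j)/n
          + cPfun d / n := by rw [R2s_eq d, hG1c]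
      have hRBs : R1s d = 1 - (((G2 d)ᶜ).card : ℝ)/n - (∑ j ∈ G2 d, wfun d j)/n
          + cQfun d / n := by rw [R1s_eq d, hG1c]
      have hRBs' : R1s d' = 1 - (((G2 d)ᶜ).card : ℝ)/n - (∑ j ∈ G2 d, wfun d' j)/n
          + cQfun d' / n := by rw [R1s_eq d', hG1, hG1c, hG2]
      have hco : ((∑ j ∈ G2 d, A j 1) - ((G2 d).card : ℝ)/n) * R1s d
          = ((∑ j ∈ (G2 d)ᶜ, A j 0) - (((G2 d)ᶜ).card : ℝ)/n) * R2s d := by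
        have := hcpl.symm
        simp only [dS1, dS2] at this
        rw [hG1c] at this
        exact this
      have hco' : ((∑ j ∈ G2 d, A' j 1) - ((G2 d).card : ℝ)/n) * R1s d'
          = ((∑ j ∈ (G2 d)ᶜ, A' j 0) - (((G2 d)ᶜ).card : ℝ)/n) * R2s d := by
        have := hcpl'.symm
        simp only [dS1, dS2] at this
        rw [hG1, hG2, hG1c, hR2s] at this
        exact this
      have hfullOr' : (∑ j, A' j 0) = 1 ∨ (∑ j, A' j 1) = 1 := by
        obtain ⟨r, hr⟩ := hfull'
        fin_cases r
        · exact Or.inl hr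
        · exact Or.inr hr
      have hconc := no_both_up hn (G2 d) i hiG2 (wfun d) (wfun d')
        (fun j => A j 1) (fun j => A j 0) (fun j => A' j 1) (fun j => A' j 0)
        t2 t1 t2' t1' (wfun_pos hv) (wfun_pos hv') (wfun_agree hdiff)
        (fun j hj => shares_G2 hv hwf (mem_G2_iff.mp hj))
        (fun j hj => ⟨(shares_G1 hv hwf (hmemQ j hj)).2,
          (shares_G1 hv hwf (hmemQ j hj)).1⟩)
        (fun j hj => shares_G2 hv' hwf' (mem_G2_iff.mp (hG2 ▸ hj)))
        (fun j hj => ⟨(shares_G1 hv' hwf' (hmemQ' j hj)).2,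
          (shares_G1 hv' hwf' (hmemQ' j hj)).1⟩)
        (hfeas.2 1) (hfeas.2 0) (hfeas'.2 1) (hfeas'.2 0) hfullOr.symm
        (cQfun d) (cQfun d') (cPfun d)
        hcPmem hcPlb hcPmem' hcPlb' hcQmem hcQlb
        (R2s d) (R1s d) (R1s d')
        hRAs hRBs hRBs' hco hco'
      apply hconc
      have hming1 : util (d i) (A' i) ≤ A' i 1 / d i 1 := by
        rw [hminA']; exact min_le_right _ _
      have hming0 : util (d i) (A' i) ≤ A' i 0 / d i 0 := by
        rw [hminA']; exact min_le_left _ _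
      have h1 : A i 1 < A' i 1 := by
        have h := lt_of_lt_of_le hcon hming1
        rw [hutilA, hdi1, div_one] at h
        exact h
      have h2 : A i 0 < A' i 0 := by
        have hlt2 := lt_of_lt_of_le hcon hming0
        rw [hutilA] at hlt2
        have hAi0 : A i 0 = A i 1 * d i 0 := by
          rw [((hwf i).2 hi).2, div_mul_cancel₀ _ (hv.1 i 0).1.ne']
        rw [hAi0]
        have := (lt_div_iff₀ (hv.1 i 0).1).mp hlt2
        linarith
      exact ⟨h1, h2⟩
    · -- reported type in G1 : cross case
      have hsh := (shares_G1 hv' hwf' hi').2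
      have hcap := t1_cap hn hv' hwf' hfeas' ⟨i, mem_G1_iff.mpr hi'⟩
      have h1 : util (d i) (A' i) ≤ A' i 1 := by
        rw [hminA']
        calc min (A' i 0 / d i 0) (A' i 1 / d i 1) ≤ A' i 1 / d i 1 := min_le_right _ _
          _ = A' i 1 := by rw [hdi1, div_one]
      have h2 : A' i 1 ≤ 1/n := by
        rw [hsh, wfun_G1 hi']
        exact max_le ((div_le_div_iff_of_pos_right hnn).mpr (hv'.1 i 1).2) hcap
      have h3 : (1:ℝ)/n ≤ util (d i) (A i) := f2s_SI hv hwf hfeas i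
      linarith
  · -- true type in G1
    have hutilA : util (d i) (A i) = A i 0 := util_self_G1 hv hwf hfeas.1 hi
    rcases ((hv'.1 i 0).2).lt_or_eq with hi' | hi'
    · -- reported type in G2 : cross case
      have hsh := (shares_G2 hv' hwf' hi').2
      have hcap := t2_cap hn hv' hwf' hfeas' ⟨i, mem_G2_iff.mpr hi'⟩
      have h1 : util (d i) (A' i) ≤ A' i 0 := by
        rw [hminA']
        calc min (A' i 0 / d i 0) (A' i 1 / d i 1) ≤ A' i 0 / d i 0 := min_le_left _ _
          _ = A' i 0 := by rw [hi, div_one]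
      have h2 : A' i 0 ≤ 1/n := by
        rw [hsh, wfun_G2 hi']
        exact max_le ((div_le_div_iff_of_pos_right hnn).mpr (hv'.1 i 0).2) hcap
      have h3 : (1:ℝ)/n ≤ util (d i) (A i) := f2s_SI hv hwf hfeas i
      linarith
    · -- reported type in G1 : same-group case, orientation 1
      have hiG1 : i ∈ G1 d := mem_G1_iff.mpr hi
      have hG1 : G1 d' = G1 d := by
        ext j
        rw [mem_G1_iff, mem_G1_iff]
        by_cases hj : j = i
        · subst hj; exact iff_of_true hi' hi
        · rw [hdiff j hj]
      have hG2c : G2 d = (G1 d)ᶜ := G2_eq_compl hv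
      have hG2c' : G2 d' = (G1 d')ᶜ := G2_eq_compl hv'
      have hG2 : G2 d' = G2 d := by rw [hG2c', hG1, ← hG2c]
      have hmemQ : ∀ j ∈ (G1 d)ᶜ, d j 0 < 1 :=
        fun j hj => not_mem_G1 hv (Finset.mem_compl.mp hj)
      have hmemQ' : ∀ j ∈ (G1 d)ᶜ, d' j 0 < 1 := by
        intro j hj
        refine not_mem_G1 hv' ?_
        rw [hG1]
        exact Finset.mem_compl.mp hj
      have hneQ : ∀ j ∈ (G1 d)ᶜ, j ≠ i :=
        fun j hj hrfl => (Finset.mem_compl.mp hj) (hrfl ▸ hiG1)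
      -- R1s is unchanged
      have hR1s : R1s d' = R1s d := by
        have hR1 : R1 d' = R1 d := by
          have hsum : ∑ j ∈ G2 d, d' j 0 = ∑ j ∈ G2 d, d j 0 :=
            Finset.sum_congr rfl (fun j hj => by
              rw [hdiff j (hneQ j (hG2c ▸ hj))])
          rw [R1, R1, hG1, hG2, hsum]
        have hsets : {j : Fin n | d' j 0 < 1} = {j : Fin n | d j 0 < 1} := by
          ext j
          by_cases hj : j = i
          · subst hj
            simp only [Set.mem_setOf_eq]
            exact iff_of_false (by rw [hi']; exact lt_irrefl 1)
              (by rw [hi]; exact lt_irrefl 1)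
          · simp only [Set.mem_setOf_eq, hdiff j hj]
        have himg : (fun j => d' j 0) '' {j : Fin n | d' j 0 < 1}
            = (fun j => d j 0) '' {j : Fin n | d j 0 < 1} := by
          rw [hsets]
          exact Set.image_congr (fun x hx => by
            rw [hdiff x (fun hrfl => absurd (hrfl ▸ hx) (by
              rw [Set.mem_setOf_eq, hi]; exact lt_irrefl 1))])
        rw [R1s, R1s, hR1, himg]
      -- data for no_both_up
      have hcPmem : ∃ j ∈ G1 d, cPfun d = wfun d j := by
        obtain ⟨j, hj, heq⟩ := cP_mem ⟨i, hiG1⟩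
        exact ⟨j, hj, by rw [heq, wfun_G1 (mem_G1_iff.mp hj)]⟩
      have hcPlb : ∀ j ∈ G1 d, cPfun d ≤ wfun d j := fun j hj => by
        rw [wfun_G1 (mem_G1_iff.mp hj)]; exact cP_lb hj
      have hcPmem' : ∃ j ∈ G1 d, cPfun d' = wfun d' j := by
        obtain ⟨j, hj, heq⟩ := cP_mem (d := d') ⟨i, hG1 ▸ hiG1⟩
        exact ⟨j, hG1 ▸ hj, by rw [heq, wfun_G1 (mem_G1_iff.mp hj)]⟩
      have hcPlb' : ∀ j ∈ G1 d, cPfun d' ≤ wfun d' j := fun j hj => by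
        have hj' : j ∈ G1 d' := hG1 ▸ hj
        rw [wfun_G1 (mem_G1_iff.mp hj')]; exact cP_lb hj'
      have hcQmem : (G1 d)ᶜ.Nonempty → ∃ j ∈ (G1 d)ᶜ, cQfun d = wfun d j := by
        rintro ⟨j₀, hj₀⟩
        obtain ⟨j, hj, heq⟩ := cQ_mem (d := d) ⟨j₀, hG2c ▸ hj₀⟩
        exact ⟨j, hG2c ▸ hj, by rw [heq, wfun_G2 (mem_G2_iff.mp hj)]⟩
      have hcQlb : ∀ j ∈ (G1 d)ᶜ, cQfun d ≤ wfun d j := fun j hj => by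
        have hj2 : j ∈ G2 d := hG2c ▸ hj
        rw [wfun_G2 (mem_G2_iff.mp hj2)]; exact cQ_lb hj2
      have hRAs : R1s d = 1 - ((G1 d).card : ℝ)/n - (∑ j ∈ (G1 d)ᶜ, wfun d j)/n
          + cQfun d / n := by rw [R1s_eq d, hG2c]
      have hRBs : R2s d = 1 - (((G1 d)ᶜ).card : ℝ)/n - (∑ j ∈ G1 d, wfun d j)/n
          + cPfun d / n := by rw [R2s_eq d, hG2c]
      have hRBs' : R2s d' = 1 - (((G1 d)ᶜ).card : ℝ)/n - (∑ j ∈ G1 d, wfun d' j)/n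
          + cPfun d' / n := by rw [R2s_eq d', hG2, hG2c, hG1]
      have hco : ((∑ j ∈ G1 d, A j 0) - ((G1 d).card : ℝ)/n) * R2s d
          = ((∑ j ∈ (G1 d)ᶜ, A j 1) - (((G1 d)ᶜ).card : ℝ)/n) * R1s d := by
        have := hcpl
        simp only [dS1, dS2] at this
        rw [hG2c] at this
        exact this
      have hco' : ((∑ j ∈ G1 d, A' j 0) - ((G1 d).card : ℝ)/n) * R2s d'
          = ((∑ j ∈ (G1 d)ᶜ, A' j 1) - (((G1 d)ᶜ).card : ℝ)/n) * R1s d := by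
        have := hcpl'
        simp only [dS1, dS2] at this
        rw [hG1, hG2, hG2c, hR1s] at this
        exact this
      have hfullOr' : (∑ j, A' j 0) = 1 ∨ (∑ j, A' j 1) = 1 := by
        obtain ⟨r, hr⟩ := hfull'
        fin_cases r
        · exact Or.inl hr
        · exact Or.inr hr
      have hconc := no_both_up hn (G1 d) i hiG1 (wfun d) (wfun d')
        (fun j => A j 0) (fun j => A j 1) (fun j => A' j 0) (fun j => A' j 1)
        t1 t2 t1' t2' (wfun_pos hv) (wfun_pos hv') (wfun_agree hdiff)
        (fun j hj => shares_G1 hv hwf (mem_G1_iff.mp hj))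
        (fun j hj => ⟨(shares_G2 hv hwf (hmemQ j hj)).2,
          (shares_G2 hv hwf (hmemQ j hj)).1⟩)
        (fun j hj => shares_G1 hv' hwf' (mem_G1_iff.mp (hG1 ▸ hj)))
        (fun j hj => ⟨(shares_G2 hv' hwf' (hmemQ' j hj)).2,
          (shares_G2 hv' hwf' (hmemQ' j hj)).1⟩)
        (hfeas.2 0) (hfeas.2 1) (hfeas'.2 0) (hfeas'.2 1) hfullOr
        (cPfun d) (cPfun d') (cQfun d)
        hcPmem hcPlb hcPmem' hcPlb' hcQmem hcQlb
        (R1s d) (R2s d) (R2s d')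
        hRAs hRBs hRBs' hco hco'
      apply hconc
      have hming1 : util (d i) (A' i) ≤ A' i 1 / d i 1 := by
        rw [hminA']; exact min_le_right _ _
      have hming0 : util (d i) (A' i) ≤ A' i 0 / d i 0 := by
        rw [hminA']; exact min_le_left _ _
      have h1 : A i 0 < A' i 0 := by
        have h := lt_of_lt_of_le hcon hming0
        rw [hutilA, hi, div_one] at h
        exact h
      have h2 : A i 1 < A' i 1 := by
        have hlt2 := lt_of_lt_of_le hcon hming1
        rw [hutilA] at hlt2
        have hAi1 : A i 1 = A i 0 * d i 1 := by
          rw [((hwf i).1 hi).2, div_mul_cancel₀ _ (hv.1 i 1).1.ne']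
        rw [hAi1]
        have := (lt_div_iff₀ (hv.1 i 1).1).mp hlt2
        linarith
      exact ⟨h1, h2⟩

end Part2

/-- With two resources, mechanism F2* satisfies SI, EF, PO and SP. -/
theorem f2s_properties :
    (∀ (n : ℕ), 0 < n → ∀ d : Fin n → Fin 2 → ℝ, ValidInstance d →
      ∀ A : Fin n → Fin 2 → ℝ, IsF2sAlloc d A →
        SI d A ∧ EF d A ∧ PO d A) ∧
    (∀ (n : ℕ), 0 < n → ∀ (d d' : Fin n → Fin 2 → ℝ) (i : Fin n),
      ValidInstance d → ValidInstance d' → (∀ j, j ≠ i → d' j = d j) →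
      ∀ A A' : Fin n → Fin 2 → ℝ, IsF2sAlloc d A → IsF2sAlloc d' A' →
        util (d i) (A' i) ≤ util (d i) (A i)) := by
  constructor
  · intro n hn d hv A hA
    obtain ⟨t1, t2, ht1, ht2, hwf, hcpl, hfeas, hfull⟩ := hA
    exact ⟨f2s_SI hv hwf hfeas, f2s_EF hn hv hwf hfeas,
      f2s_PO hv hwf hfeas hfull⟩
  · intro n hn d d' i hv hv' hdiff A A' hA hA'
    exact f2s_SP hn d d' i hv hv' hdiff A A' hA hA'
end

section
/- For every number of resources m ≥ 2 and every strictly monotone function g : [0,1]^m → ℝ, the mechanism F_g satisfies SI, EF, PO, and SP. -/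
open Finset
open scoped Classical

/-- Strict elementwise monotonicity of `g` on `[0,1]^m`. -/
def MonotoneOn01 {m : ℕ} (g : (Fin m → ℝ) → ℝ) : Prop :=
  ∀ v w : Fin m → ℝ, (∀ r, 0 ≤ w r) → (∀ r, v r ≤ 1) → (∀ r, w r < v r) → g w < g v

/-- The output of mechanism `F_g`: a feasible non-wasteful allocation in which
every agent has scale factor at least `1/n`, all agents whose scale factor
exceeds `1/n` share the common minimal `g`-value `t`, all `g`-values are at
least `t`, and some resource is fully allocated. -/
def IsFgAlloc {n m : ℕ} (g : (Fin m → ℝ) → ℝ) (d A : Fin n → Fin m → ℝ) : Prop :=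
  ∃ y : Fin n → ℝ, (∀ i r, A i r = y i * d i r) ∧ (∀ i, (1 : ℝ) / n ≤ y i) ∧
    (∃ t : ℝ, (∀ i, t ≤ g (A i)) ∧ ∀ i, (1 : ℝ) / n < y i → g (A i) = t) ∧
    Feasible A ∧ ∃ r, ∑ i, A i r = 1

section FgAux

variable {m : ℕ}

lemma util_scaled [Nonempty (Fin m)] (dv : Fin m → ℝ) (hd : ∀ r, 0 < dv r)
    (y : ℝ) (hy : 0 ≤ y) : util dv (fun r => y * dv r) = y := by
  have hset : {z : ℝ | 0 ≤ z ∧ ∀ r, z * dv r ≤ y * dv r} = Set.Icc 0 y := by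
    ext z
    simp only [Set.mem_setOf_eq, Set.mem_Icc]
    constructor
    · rintro ⟨h0, h⟩
      exact ⟨h0, le_of_mul_le_mul_right (h (Classical.arbitrary (Fin m))) (hd _)⟩
    · rintro ⟨h0, h⟩
      exact ⟨h0, fun r => mul_le_mul_of_nonneg_right h (hd r).le⟩
  have : util dv (fun r => y * dv r)
      = sSup {z : ℝ | 0 ≤ z ∧ ∀ r, z * dv r ≤ y * dv r} := rfl
  rw [this, hset]
  exact csSup_Icc hy

lemma util_mem [Nonempty (Fin m)] (dv B : Fin m → ℝ) (hd : ∀ r, 0 < dv r)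
    (hB : ∀ r, 0 ≤ B r) : 0 ≤ util dv B ∧ ∀ r, util dv B * dv r ≤ B r := by
  set S : Set ℝ := {z | 0 ≤ z ∧ ∀ r, z * dv r ≤ B r} with hS
  have h0 : (0 : ℝ) ∈ S := ⟨le_refl 0, fun r => by simpa using hB r⟩
  obtain ⟨r0⟩ := (inferInstance : Nonempty (Fin m))
  have hbdd : BddAbove S := ⟨B r0 / dv r0, fun z hz => (le_div_iff₀ (hd r0)).mpr (hz.2 r0)⟩
  have hclosed : IsClosed S := by
    have hrw : S = Set.Ici 0 ∩ ⋂ r, {z : ℝ | z * dv r ≤ B r} := by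
      ext z
      simp only [hS, Set.mem_setOf_eq, Set.mem_inter_iff, Set.mem_Ici, Set.mem_iInter]
    rw [hrw]
    refine isClosed_Ici.inter (isClosed_iInter fun r => ?_)
    exact isClosed_le (by continuity) continuous_const
  have hmem : sSup S ∈ S := hclosed.csSup_mem ⟨0, h0⟩ hbdd
  exact ⟨hmem.1, hmem.2⟩

end FgAux

/-- For every `m ≥ 2` and strictly monotone `g`, the mechanism `F_g` satisfies
SI, EF, PO and SP. -/

theorem fg_properties (m : ℕ) (hm : 2 ≤ m) (g : (Fin m → ℝ) → ℝ)
    (hg : MonotoneOn01 g) :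
    (∀ (n : ℕ), 0 < n → ∀ d A : Fin n → Fin m → ℝ, ValidInstance d →
      IsFgAlloc g d A → SI d A ∧ EF d A ∧ PO d A) ∧
    (∀ (n : ℕ), 0 < n → ∀ (d d' : Fin n → Fin m → ℝ) (i : Fin n),
      ValidInstance d → ValidInstance d' → (∀ j, j ≠ i → d' j = d j) →
      ∀ A A' : Fin n → Fin m → ℝ, IsFgAlloc g d A → IsFgAlloc g d' A' →
        util (d i) (A' i) ≤ util (d i) (A i)) := by
  haveI : Nonempty (Fin m) := ⟨⟨0, by omega⟩⟩
  constructor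
  · -- SI, EF, PO
    intro n hn d A hd hA
    obtain ⟨y, hAy, hy, ⟨t, ht1, ht2⟩, hfeas, r1, hr1⟩ := hA
    have hnpos : (0 : ℝ) < 1 / n := one_div_pos.mpr (by exact_mod_cast hn)
    have hdpos : ∀ i r, 0 < d i r := fun i r => (hd.1 i r).1
    have hy0 : ∀ i, 0 ≤ y i := fun i => le_trans hnpos.le (hy i)
    have hA1 : ∀ i r, A i r ≤ 1 := by
      intro i r
      calc A i r ≤ ∑ j, A j r :=
            Finset.single_le_sum (fun j _ => hfeas.1 j r) (mem_univ i)
        _ ≤ 1 := hfeas.2 r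
    have hutil : ∀ i, util (d i) (A i) = y i := by
      intro i
      have hAi : A i = fun r => y i * d i r := funext (hAy i)
      rw [hAi, util_scaled (d i) (hdpos i) (y i) (hy0 i)]
    refine ⟨?_, ?_, ?_⟩
    · intro i; rw [hutil i]; exact hy i
    · -- EF
      intro i j
      rw [hutil i]
      by_contra hlt
      push_neg at hlt
      obtain ⟨hc0, hmem⟩ := util_mem (d i) (A j) (hdpos i) (fun r => hfeas.1 j r)
      set c := util (d i) (A j) with hc
      have hdom : ∀ r, A i r < A j r := by
        intro r
        have h2 : y i * d i r < c * d i r :=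
          mul_lt_mul_of_pos_right hlt (hdpos i r)
        have := hmem r
        rw [hAy i r]; linarith
      have hgij : g (A i) < g (A j) :=
        hg (A j) (A i) (fun r => hfeas.1 i r) (fun r => hA1 j r) hdom
      obtain ⟨rs, hrs⟩ := hd.2 i
      have hcyj : c ≤ y j := by
        have h1 := hmem rs
        rw [hrs, mul_one] at h1
        calc c ≤ A j rs := h1
          _ = y j * d j rs := hAy j rs
          _ ≤ y j * 1 := mul_le_mul_of_nonneg_left (hd.1 j rs).2 (hy0 j)
          _ = y j := mul_one _
      have hyj : (1 : ℝ) / n < y j := lt_of_le_of_lt (hy i) (lt_of_lt_of_le hlt hcyj)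
      have h3 := ht2 j hyj
      have h4 := ht1 i
      linarith
    · -- PO
      rintro ⟨A', hA'feas, hge, i0, hgt⟩
      have hmemA' : ∀ j, 0 ≤ util (d j) (A' j) ∧ ∀ r, util (d j) (A' j) * d j r ≤ A' j r :=
        fun j => util_mem (d j) (A' j) (hdpos j) (fun r => hA'feas.1 j r)
      have hle : ∀ j ∈ (univ : Finset (Fin n)), A j r1 ≤ A' j r1 := by
        intro j _
        have h1 := (hmemA' j).2 r1
        rw [hAy j r1]
        calc y j * d j r1 ≤ util (d j) (A' j) * d j r1 := by
              apply mul_le_mul_of_nonneg_right _ (hdpos j r1).le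
              rw [← hutil j]; exact hge j
          _ ≤ A' j r1 := h1
      have hstrict : A i0 r1 < A' i0 r1 := by
        have h1 := (hmemA' i0).2 r1
        rw [hutil i0] at hgt
        have h2 : y i0 * d i0 r1 < util (d i0) (A' i0) * d i0 r1 :=
          mul_lt_mul_of_pos_right hgt (hdpos i0 r1)
        rw [hAy i0 r1]; linarith
      have hlt1 : (1 : ℝ) < ∑ j, A' j r1 := by
        rw [← hr1]
        exact Finset.sum_lt_sum hle ⟨i0, mem_univ i0, hstrict⟩
      linarith [hA'feas.2 r1]
  · -- SP
    intro n hn d d' i hd hd' hagree A A' hA hA'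
    obtain ⟨y, hAy, hy, ⟨t, ht1, ht2⟩, hfeas, r1, hr1⟩ := hA
    obtain ⟨y', hAy', hy', ⟨t', ht'1, ht'2⟩, hfeas', r2, hr2⟩ := hA'
    have hnpos : (0 : ℝ) < 1 / n := one_div_pos.mpr (by exact_mod_cast hn)
    have hdpos : ∀ j r, 0 < d j r := fun j r => (hd.1 j r).1
    have hd'pos : ∀ j r, 0 < d' j r := fun j r => (hd'.1 j r).1
    have hy0 : ∀ j, 0 ≤ y j := fun j => le_trans hnpos.le (hy j)
    have hy'0 : ∀ j, 0 ≤ y' j := fun j => le_trans hnpos.le (hy' j)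
    have hA1 : ∀ j r, A j r ≤ 1 := by
      intro j r
      calc A j r ≤ ∑ k, A k r :=
            Finset.single_le_sum (fun k _ => hfeas.1 k r) (mem_univ j)
        _ ≤ 1 := hfeas.2 r
    have hA'1 : ∀ j r, A' j r ≤ 1 := by
      intro j r
      calc A' j r ≤ ∑ k, A' k r :=
            Finset.single_le_sum (fun k _ => hfeas'.1 k r) (mem_univ j)
        _ ≤ 1 := hfeas'.2 r
    have hutil : util (d i) (A i) = y i := by
      have hAi : A i = fun r => y i * d i r := funext (hAy i)
      rw [hAi, util_scaled (d i) (hdpos i) (y i) (hy0 i)]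
    rw [hutil]
    by_contra hlt
    push_neg at hlt
    obtain ⟨hc0, hmem⟩ := util_mem (d i) (A' i) (hdpos i) (fun r => hfeas'.1 i r)
    set c := util (d i) (A' i) with hc
    -- agent i's bundle strictly increases componentwise
    have hdomi : ∀ r, A i r < A' i r := by
      intro r
      have h2 : y i * d i r < c * d i r := mul_lt_mul_of_pos_right hlt (hdpos i r)
      have := hmem r
      rw [hAy i r]; linarith
    -- claim: t' < t, using the saturated resource r1 of A
    have hclaim : t' < t := by
      have hex : ∃ j, j ≠ i ∧ A' j r1 < A j r1 := by
        by_contra h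
        push_neg at h
        have hle : ∀ j ∈ (univ : Finset (Fin n)), A j r1 ≤ A' j r1 := by
          intro j _
          by_cases hj : j = i
          · subst hj; exact (hdomi r1).le
          · by_contra h2
            push_neg at h2
            exact absurd h2 (not_lt.mpr (h j hj))
        have : (1 : ℝ) < ∑ j, A' j r1 := by
          rw [← hr1]
          exact Finset.sum_lt_sum hle ⟨i, mem_univ i, hdomi r1⟩
        linarith [hfeas'.2 r1]
      obtain ⟨j, hji, hjlt⟩ := hex
      have hdj : d' j = d j := hagree j hji
      have hyj : y' j < y j := by
        have h1 : y' j * d j r1 < y j * d j r1 := by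
          have := hAy' j r1
          rw [hdj] at this
          rw [← this, ← hAy j r1]; exact hjlt
        exact lt_of_mul_lt_mul_right h1 (hdpos j r1).le
      have hdomj : ∀ r, A' j r < A j r := by
        intro r
        rw [hAy j r, hAy' j r, hdj]
        exact mul_lt_mul_of_pos_right hyj (hdpos j r)
      have hgj : g (A' j) < g (A j) :=
        hg (A j) (A' j) (fun r => hfeas'.1 j r) (fun r => hA1 j r) hdomj
      have hyjn : (1 : ℝ) / n < y j := lt_of_le_of_lt (hy' j) hyj
      have h3 := ht2 j hyjn
      have h4 := ht'1 j
      linarith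
    -- now split on whether y' i exceeds 1/n
    rcases lt_or_eq_of_le (hy' i) with hyi | hyi
    · -- y' i > 1/n : g (A' i) = t', but g (A i) < g (A' i) and t ≤ g (A i)
      have h5 := ht'2 i hyi
      have hgi : g (A i) < g (A' i) :=
        hg (A' i) (A i) (fun r => hfeas.1 i r) (fun r => hA'1 i r) hdomi
      have h6 := ht1 i
      linarith
    · -- y' i = 1/n : then c ≤ 1/n ≤ y i < c, contradiction
      obtain ⟨rs, hrs⟩ := hd.2 i
      have h1 := hmem rs
      rw [hrs, mul_one] at h1
      have h2 : A' i rs ≤ y' i := by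
        calc A' i rs = y' i * d' i rs := hAy' i rs
          _ ≤ y' i * 1 := mul_le_mul_of_nonneg_left (hd'.1 i rs).2 (hy'0 i)
          _ = y' i := mul_one _
      have h3 := hy i
      linarith
end
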